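/- arXiv:1504.04183 — 3 statements merged into one kernel-verified Lean document; each statement's English description precedes it below -/
import Mathlib

section
/- For all C₁ > 0 and C₂ > 0 there exist constants C₃ > 0 and C ≥ 1 such that for all 0 ≤ t < τ < T ≤ T₀ and all x, y ∈ ℝ^d, ∫_{ℝ^d} p̄_{C₁}(t,τ,x,z) · p̄_{C₂}(τ,T,z,y) dz ≤ C · p̄_{C₃}(t,T,x,y). -/
open MeasureTheory

noncomputable section

/-- The standard upper bound `p̄_c(t,s,x,y) = (s−t)^{−d/α} (1 + |θ_{t,s}(y)−x|/(s−t)^{1/α})^{−(α+γ)}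
    Q(c |θ_{t,s}(y)−x|)`. -/
def pbar (d : ℕ) (α γ : ℝ)
    (θ : ℝ → ℝ → EuclideanSpace ℝ (Fin d) → EuclideanSpace ℝ (Fin d))
    (Q : ℝ → ℝ) (c : ℝ) (t s : ℝ) (x y : EuclideanSpace ℝ (Fin d)) : ℝ :=
  (s - t) ^ (-(d : ℝ) / α) * (1 + ‖θ t s y - x‖ / (s - t) ^ (1 / α)) ^ (-(α + γ)) *
    Q (c * ‖θ t s y - x‖)

section Stmt4AuxSection
open Set Real

namespace Stmt4Aux

variable {E : Type*} [NormedAddCommGroup E] [NormedSpace ℝ E]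

/-- Antitonicity of `x ^ (-β)`. -/
lemma rpow_neg_anti {β x y : ℝ} (hβ : 0 ≤ β) (hx : 0 < x) (hxy : x ≤ y) :
    y ^ (-β) ≤ x ^ (-β) := by
  rw [Real.rpow_neg hx.le, Real.rpow_neg (hx.trans_le hxy).le]
  exact inv_anti₀ (Real.rpow_pos_of_pos hx β) (Real.rpow_le_rpow hx.le hxy hβ)

/-- Forward Gronwall estimate for two trajectories of the same ODE. -/
lemma gron_fwd {T₀ K : ℝ} (hK : 0 ≤ K) (v : ℝ → E → E)
    (hv : ∀ t, LipschitzWith K.toNNReal (v t))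
    {f g : ℝ → E}
    (hf : ∀ u ∈ Icc (0:ℝ) T₀, HasDerivWithinAt f (v u (f u)) (Icc (0:ℝ) T₀) u)
    (hg : ∀ u ∈ Icc (0:ℝ) T₀, HasDerivWithinAt g (v u (g u)) (Icc (0:ℝ) T₀) u)
    {p q : ℝ} (hp : p ∈ Icc (0:ℝ) T₀) (hq : q ∈ Icc (0:ℝ) T₀) (hpq : p ≤ q) :
    dist (f q) (g q) ≤ dist (f p) (g p) * Real.exp (K * (q - p)) := by
  have cf : ContinuousOn f (Icc (0:ℝ) T₀) := fun u hu => (hf u hu).continuousWithinAt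
  have cg : ContinuousOn g (Icc (0:ℝ) T₀) := fun u hu => (hg u hu).continuousWithinAt
  have key : ∀ u ∈ Ico p q, ∀ {h : ℝ → E},
      (∀ w ∈ Icc (0:ℝ) T₀, HasDerivWithinAt h (v w (h w)) (Icc (0:ℝ) T₀) w) →
      HasDerivWithinAt h (v u (h u)) (Ici u) u := by
    intro u hu h hh
    have hu' : u ∈ Icc (0:ℝ) T₀ := ⟨hp.1.trans hu.1, hu.2.le.trans hq.2⟩
    refine (hh u hu').mono_of_mem_nhdsWithin ?_
    exact Filter.mem_of_superset
      (Icc_mem_nhdsGE_of_mem ⟨le_rfl, lt_of_lt_of_le hu.2 hq.2⟩)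
      (Icc_subset_Icc hu'.1 le_rfl)
  have := dist_le_of_trajectories_ODE (K := K.toNNReal) hv
      (cf.mono (Icc_subset_Icc hp.1 hq.2)) (fun u hu => key u hu hf)
      (cg.mono (Icc_subset_Icc hp.1 hq.2)) (fun u hu => key u hu hg)
      le_rfl q ⟨hpq, le_rfl⟩
  simpa [Real.coe_toNNReal K hK] using this

/-- Two-sided Gronwall estimate. -/
lemma gron {T₀ K : ℝ} (hT₀ : 0 < T₀) (hK : 0 ≤ K) (v : ℝ → E → E)
    (hv : ∀ t, LipschitzWith K.toNNReal (v t))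
    {f g : ℝ → E}
    (hf : ∀ u ∈ Icc (0:ℝ) T₀, HasDerivWithinAt f (v u (f u)) (Icc (0:ℝ) T₀) u)
    (hg : ∀ u ∈ Icc (0:ℝ) T₀, HasDerivWithinAt g (v u (g u)) (Icc (0:ℝ) T₀) u)
    {a b : ℝ} (ha : a ∈ Icc (0:ℝ) T₀) (hb : b ∈ Icc (0:ℝ) T₀) :
    dist (f a) (g a) ≤ Real.exp (K * T₀) * dist (f b) (g b) := by
  have hexp : ∀ c : ℝ, c ≤ T₀ → Real.exp (K * c) ≤ Real.exp (K * T₀) := fun c hc =>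
    Real.exp_le_exp.2 (mul_le_mul_of_nonneg_left hc hK)
  rcases le_total b a with hba | hab
  · have := gron_fwd hK v hv hf hg hb ha hba
    calc dist (f a) (g a) ≤ dist (f b) (g b) * Real.exp (K * (a - b)) := this
    _ ≤ dist (f b) (g b) * Real.exp (K * T₀) :=
        mul_le_mul_of_nonneg_left (hexp _ (by linarith [ha.2, hb.1])) dist_nonneg
    _ = _ := mul_comm _ _
  · -- time reversal
    set i : ℝ → ℝ := fun u => T₀ - u with hidef
    have hmaps : MapsTo i (Icc (0:ℝ) T₀) (Icc (0:ℝ) T₀) := fun u hu =>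
      ⟨by simp only [hidef]; linarith [hu.2], by simp only [hidef]; linarith [hu.1]⟩
    set v' : ℝ → E → E := fun w x => -(v (T₀ - w) x) with hv'def
    have hv' : ∀ t, LipschitzWith K.toNNReal (v' t) := by
      intro t
      apply LipschitzWith.of_dist_le_mul
      intro x y
      simp only [hv'def, dist_neg_neg]
      exact (hv (T₀ - t)).dist_le_mul x y
    have deriv_comp : ∀ (h : ℝ → E),
        (∀ w ∈ Icc (0:ℝ) T₀, HasDerivWithinAt h (v w (h w)) (Icc (0:ℝ) T₀) w) →
        ∀ u ∈ Icc (0:ℝ) T₀,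
          HasDerivWithinAt (h ∘ i) (v' u ((h ∘ i) u)) (Icc (0:ℝ) T₀) u := by
      intro h hh u hu
      have hi : HasDerivWithinAt i (-1) (Icc (0:ℝ) T₀) u :=
        ((hasDerivAt_id u).const_sub T₀).hasDerivWithinAt
      have := HasDerivWithinAt.scomp u (hh (i u) (hmaps hu)) hi hmaps
      simpa [hv'def, neg_one_smul] using this
    have hfa : (f ∘ i) (T₀ - a) = f a := by simp [hidef]
    have hga : (g ∘ i) (T₀ - a) = g a := by simp [hidef]
    have hfb : (f ∘ i) (T₀ - b) = f b := by simp [hidef]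
    have hgb : (g ∘ i) (T₀ - b) = g b := by simp [hidef]
    have hmem : ∀ c ∈ Icc (0:ℝ) T₀, T₀ - c ∈ Icc (0:ℝ) T₀ := fun c hc =>
      ⟨by linarith [hc.2], by linarith [hc.1]⟩
    have := gron_fwd hK v' hv' (deriv_comp f hf) (deriv_comp g hg)
      (hmem b hb) (hmem a ha) (by linarith)
    rw [hfa, hga, hfb, hgb] at this
    calc dist (f a) (g a) ≤ dist (f b) (g b) * Real.exp (K * ((T₀ - a) - (T₀ - b))) := this
    _ ≤ dist (f b) (g b) * Real.exp (K * T₀) :=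
        mul_le_mul_of_nonneg_left (hexp _ (by linarith [hb.2, ha.1])) dist_nonneg
    _ = _ := mul_comm _ _

/-- Exact integral of the translated and rescaled kernel. -/
lemma kernel_int (d : ℕ) {β : ℝ} (hβ : (d:ℝ) < β) {h : ℝ} (hh : 0 < h)
    (c : EuclideanSpace ℝ (Fin d)) :
    Integrable (fun z : EuclideanSpace ℝ (Fin d) => (1 + ‖z - c‖ / h) ^ (-β)) ∧
    ∫ z : EuclideanSpace ℝ (Fin d), (1 + ‖z - c‖ / h) ^ (-β) =
      h ^ (d:ℝ) * ∫ ζ : EuclideanSpace ℝ (Fin d), (1 + ‖ζ‖) ^ (-β) := by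
  have hfin : (Module.finrank ℝ (EuclideanSpace ℝ (Fin d)) : ℝ) < β := by
    rw [finrank_euclideanSpace_fin]; exact hβ
  set g : EuclideanSpace ℝ (Fin d) → ℝ := fun ζ => (1 + ‖ζ‖) ^ (-β) with hgdef
  have hg : Integrable g := integrable_one_add_norm hfin
  have hrw : ∀ z : EuclideanSpace ℝ (Fin d),
      (1 + ‖z - c‖ / h) ^ (-β) = g (h⁻¹ • (z - c)) := by
    intro z
    simp only [hgdef, norm_smul, norm_inv, Real.norm_eq_abs, abs_of_pos hh, div_eq_inv_mul]
  have h1 : Integrable (fun z : EuclideanSpace ℝ (Fin d) => g (h⁻¹ • z)) :=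
    (integrable_comp_smul_iff volume g (inv_ne_zero hh.ne')).2 hg
  have h2 : Integrable (fun z : EuclideanSpace ℝ (Fin d) => g (h⁻¹ • (z - c))) :=
    h1.comp_sub_right c
  constructor
  · refine h2.congr (Filter.Eventually.of_forall fun z => ?_)
    exact (hrw z).symm
  · have hd : |((h⁻¹) ^ Module.finrank ℝ (EuclideanSpace ℝ (Fin d)))⁻¹| = h ^ (d:ℝ) := by
      rw [finrank_euclideanSpace_fin, inv_pow, inv_inv, abs_of_pos (pow_pos hh d),
        Real.rpow_natCast]
    calc ∫ z : EuclideanSpace ℝ (Fin d), (1 + ‖z - c‖ / h) ^ (-β)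
        = ∫ z : EuclideanSpace ℝ (Fin d), g (h⁻¹ • (z - c)) := by
          exact integral_congr_ae (Filter.Eventually.of_forall hrw)
      _ = ∫ z : EuclideanSpace ℝ (Fin d), g (h⁻¹ • z) :=
          integral_sub_right_eq_self (fun z => g (h⁻¹ • z)) c
      _ = |((h⁻¹) ^ Module.finrank ℝ (EuclideanSpace ℝ (Fin d)))⁻¹| • ∫ ζ, g ζ :=
          MeasureTheory.Measure.integral_comp_smul volume g h⁻¹
      _ = h ^ (d:ℝ) * ∫ ζ, g ζ := by rw [hd, smul_eq_mul]

end Stmt4Aux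

namespace Stmt4Aux

lemma rpow_anti_of_nonpos {e x y : ℝ} (he : e ≤ 0) (hx : 0 < x) (hxy : x ≤ y) :
    y ^ e ≤ x ^ e := by
  have h : e = -(-e) := (neg_neg e).symm
  rw [h]
  exact rpow_neg_anti (by linarith) hx hxy

lemma pow_cancel (d : ℕ) {u : ℝ} (hu : 0 < u) (α : ℝ) :
    u ^ (-(d:ℝ)/α) * (u ^ (1/α)) ^ (d:ℝ) = 1 := by
  rw [← Real.rpow_mul hu.le, ← Real.rpow_add hu,
    show -(d:ℝ)/α + 1/α*(d:ℝ) = 0 by ring, Real.rpow_zero]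

lemma rho_eq {u r α β e : ℝ} (hu : 0 < u) (hr : 0 ≤ r) :
    u ^ e * (1 + r / u ^ (1/α)) ^ (-β) = u ^ (e + 1/α*β) * (u ^ (1/α) + r) ^ (-β) := by
  have hh : 0 < u ^ (1/α) := Real.rpow_pos_of_pos hu _
  have h1 : 1 + r / u ^ (1/α) = (u ^ (1/α) + r) / u ^ (1/α) := by field_simp
  have h2 : ((u ^ (1/α) + r) / u ^ (1/α)) ^ (-β)
      = (u ^ (1/α) + r) ^ (-β) * u ^ (1/α*β) := by
    rw [Real.div_rpow (by positivity) hh.le, Real.rpow_neg hh.le β, div_inv_eq_mul,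
      ← Real.rpow_mul hu.le]
  rw [h1, h2, Real.rpow_add hu]
  ring

end Stmt4Aux

end Stmt4AuxSection

set_option maxHeartbeats 4000000

/-- "semigroup" property of the bound `p̄`: for all `C₁, C₂ > 0` there are
`C₃ > 0` and `C ≥ 1` such that
`∫ p̄_{C₁}(t,τ,x,z) p̄_{C₂}(τ,T,z,y) dz ≤ C p̄_{C₃}(t,T,x,y)`. -/
theorem stmt4 (d : ℕ) (hd : 1 ≤ d) (T₀ α γ η δ K : ℝ)
    (hT₀ : 0 < T₀) (hα0 : 0 < α) (hα2 : α < 2) (hγ1 : 1 ≤ γ) (hγd : γ ≤ (d : ℝ))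
    (hαγ : (d : ℝ) < α + γ) (hη0 : 0 < η) (hη1 : η < 1) (hδ : 0 < δ) (hK : 0 < K)
    (F : ℝ → EuclideanSpace ℝ (Fin d) → EuclideanSpace ℝ (Fin d))
    (hFmeas : Measurable (Function.uncurry F))
    (hFlip : ∀ t ∈ Set.Icc (0:ℝ) T₀, ∀ x x' : EuclideanSpace ℝ (Fin d),
      ‖F t x - F t x'‖ ≤ K * ‖x - x'‖)
    (hF0 : ∀ t ∈ Set.Icc (0:ℝ) T₀, ‖F t 0‖ ≤ K)
    (θ : ℝ → ℝ → EuclideanSpace ℝ (Fin d) → EuclideanSpace ℝ (Fin d))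
    (hflow : ∀ s ∈ Set.Icc (0:ℝ) T₀, ∀ x : EuclideanSpace ℝ (Fin d),
      θ s s x = x ∧ ∀ u ∈ Set.Icc (0:ℝ) T₀,
        HasDerivWithinAt (fun v => θ v s x) (F u (θ u s x)) (Set.Icc (0:ℝ) T₀) u)
    (Q : ℝ → ℝ) (hQmono : AntitoneOn Q (Set.Ici 0)) (hQnonneg : ∀ s : ℝ, 0 ≤ s → 0 ≤ Q s)
    (C₁ C₂ : ℝ) (hC₁ : 0 < C₁) (hC₂ : 0 < C₂) :
    ∃ C₃ > 0, ∃ C ≥ (1:ℝ), ∀ t τ T : ℝ, ∀ x y : EuclideanSpace ℝ (Fin d),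
      0 ≤ t → t < τ → τ < T → T ≤ T₀ →
        ∫ z, pbar d α γ θ Q C₁ t τ x z * pbar d α γ θ Q C₂ τ T z y ≤
          C * pbar d α γ θ Q C₃ t T x y := by
  classical
  -- the (extended) vector field, Lipschitz for all times
  set vF : ℝ → EuclideanSpace ℝ (Fin d) → EuclideanSpace ℝ (Fin d) := fun u => if u ∈ Set.Icc (0:ℝ) T₀ then F u else 0 with hvFdef
  have hv : ∀ u, LipschitzWith K.toNNReal (vF u) := by
    intro u
    by_cases hu : u ∈ Set.Icc (0:ℝ) T₀
    · apply LipschitzWith.of_dist_le_mul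
      intro p q
      simp only [hvFdef, if_pos hu, dist_eq_norm]
      rw [Real.coe_toNNReal K hK.le]
      exact hFlip u hu p q
    · simp only [hvFdef, if_neg hu]
      exact (LipschitzWith.const (0 : EuclideanSpace ℝ (Fin d))).weaken zero_le
  have htraj : ∀ s ∈ Set.Icc (0:ℝ) T₀, ∀ p : EuclideanSpace ℝ (Fin d), ∀ u ∈ Set.Icc (0:ℝ) T₀,
      HasDerivWithinAt (fun w => θ w s p) (vF u (θ u s p)) (Set.Icc (0:ℝ) T₀) u := by
    intro s hs p u hu
    have h := (hflow s hs p).2 u hu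
    simpa only [hvFdef, if_pos hu] using h
  set L := Real.exp (K * T₀) with hLdef
  have hL1 : 1 ≤ L := Real.one_le_exp (by positivity)
  have hL0 : 0 < L := lt_of_lt_of_le one_pos hL1
  -- Gronwall consequences
  have hgron : ∀ (f g : ℝ → EuclideanSpace ℝ (Fin d)),
      (∀ u ∈ Set.Icc (0:ℝ) T₀, HasDerivWithinAt f (vF u (f u)) (Set.Icc (0:ℝ) T₀) u) →
      (∀ u ∈ Set.Icc (0:ℝ) T₀, HasDerivWithinAt g (vF u (g u)) (Set.Icc (0:ℝ) T₀) u) →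
      ∀ a ∈ Set.Icc (0:ℝ) T₀, ∀ b ∈ Set.Icc (0:ℝ) T₀,
        dist (f a) (g a) ≤ L * dist (f b) (g b) := by
    intro f g hf hg a ha b hb
    exact Stmt4Aux.gron hT₀ hK.le vF hv hf hg ha hb
  have hsg : ∀ s₁ ∈ Set.Icc (0:ℝ) T₀, ∀ s₂ ∈ Set.Icc (0:ℝ) T₀, ∀ s₃ ∈ Set.Icc (0:ℝ) T₀,
      ∀ p : EuclideanSpace ℝ (Fin d), θ s₁ s₂ (θ s₂ s₃ p) = θ s₁ s₃ p := by
    intro s₁ hs₁ s₂ hs₂ s₃ hs₃ p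
    have h0 : θ s₂ s₂ (θ s₂ s₃ p) = θ s₂ s₃ p := (hflow s₂ hs₂ _).1
    have h := hgron (fun w => θ w s₂ (θ s₂ s₃ p)) (fun w => θ w s₃ p)
      (htraj s₂ hs₂ _) (htraj s₃ hs₃ _) s₁ hs₁ s₂ hs₂
    simp only [h0] at h
    rw [dist_self, mul_zero] at h
    exact dist_le_zero.1 h
  have hlipθ : ∀ s₁ ∈ Set.Icc (0:ℝ) T₀, ∀ s₂ ∈ Set.Icc (0:ℝ) T₀, ∀ p q : EuclideanSpace ℝ (Fin d),
      ‖θ s₁ s₂ p - θ s₁ s₂ q‖ ≤ L * ‖p - q‖ := by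
    intro s₁ hs₁ s₂ hs₂ p q
    have h := hgron (fun w => θ w s₂ p) (fun w => θ w s₂ q)
      (htraj s₂ hs₂ _) (htraj s₂ hs₂ _) s₁ hs₁ s₂ hs₂
    simp only [(hflow s₂ hs₂ p).1, (hflow s₂ hs₂ q).1] at h
    simpa [dist_eq_norm] using h
  -- constants
  set β := α + γ with hβdef
  have hβd : (d : ℝ) < β := hαγ
  have hβ0 : 0 < β := lt_of_le_of_lt (Nat.cast_nonneg d) hαγ
  set C₀ := ∫ ζ : EuclideanSpace ℝ (Fin d), (1 + ‖ζ‖) ^ (-β) with hC₀def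
  have hC₀nonneg : 0 ≤ C₀ :=
    integral_nonneg fun ζ => Real.rpow_nonneg (by positivity) _
  set C₃ := min C₁ C₂ / (2 * L) with hC₃def
  have hC₃0 : 0 < C₃ := div_pos (lt_min hC₁ hC₂) (by positivity)
  set MC := C₀ * (1 + L ^ (d:ℝ)) * ((4*L) ^ β + 2 ^ (β + (d:ℝ)/α)) with hMCdef
  have hA4 : (0:ℝ) ≤ (4*L) ^ β := Real.rpow_nonneg (by positivity) _
  have hB2 : (0:ℝ) ≤ (2:ℝ) ^ (β + (d:ℝ)/α) := Real.rpow_nonneg (by norm_num) _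
  have hLd : (0:ℝ) ≤ L ^ (d:ℝ) := Real.rpow_nonneg hL0.le _
  have hMC0 : 0 ≤ MC := by
    rw [hMCdef]
    have h1 : (0:ℝ) ≤ 1 + L ^ (d:ℝ) := by linarith
    exact mul_nonneg (mul_nonneg hC₀nonneg h1) (by linarith)
  have hCC0 : C₀ ≤ C₀ * (1 + L ^ (d:ℝ)) := by
    have h := mul_nonneg hC₀nonneg hLd
    nlinarith
  have hCL0 : C₀ * L ^ (d:ℝ) ≤ C₀ * (1 + L ^ (d:ℝ)) := by
    have h := mul_nonneg hC₀nonneg hLd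
    nlinarith
  have hMCge2 : C₀ * 2 ^ (β + (d:ℝ)/α) ≤ MC := by
    calc C₀ * 2 ^ (β + (d:ℝ)/α)
        ≤ (C₀ * (1 + L ^ (d:ℝ))) * 2 ^ (β + (d:ℝ)/α) :=
          mul_le_mul_of_nonneg_right hCC0 hB2
      _ ≤ (C₀ * (1 + L ^ (d:ℝ))) * ((4*L) ^ β + 2 ^ (β + (d:ℝ)/α)) := by
          apply mul_le_mul_of_nonneg_left (by linarith)
          exact mul_nonneg hC₀nonneg (by linarith)
      _ = MC := by rw [hMCdef]
  have hMCgeL2 : C₀ * L ^ (d:ℝ) * 2 ^ (β + (d:ℝ)/α) ≤ MC := by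
    calc C₀ * L ^ (d:ℝ) * 2 ^ (β + (d:ℝ)/α)
        ≤ (C₀ * (1 + L ^ (d:ℝ))) * 2 ^ (β + (d:ℝ)/α) :=
          mul_le_mul_of_nonneg_right hCL0 hB2
      _ ≤ (C₀ * (1 + L ^ (d:ℝ))) * ((4*L) ^ β + 2 ^ (β + (d:ℝ)/α)) := by
          apply mul_le_mul_of_nonneg_left (by linarith)
          exact mul_nonneg hC₀nonneg (by linarith)
      _ = MC := by rw [hMCdef]
  have hMCgeB : C₀ * (1 + L ^ (d:ℝ)) * (4*L) ^ β ≤ MC := by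
    calc C₀ * (1 + L ^ (d:ℝ)) * (4*L) ^ β
        ≤ (C₀ * (1 + L ^ (d:ℝ))) * ((4*L) ^ β + 2 ^ (β + (d:ℝ)/α)) := by
          apply mul_le_mul_of_nonneg_left (by linarith)
          exact mul_nonneg hC₀nonneg (by linarith)
      _ = MC := by rw [hMCdef]
  refine ⟨C₃, hC₃0, max 1 (Q 0 * MC + 1), le_max_left _ _, ?_⟩
  intro t τ T x y ht htτ hτT hTT₀
  have htI : t ∈ Set.Icc (0:ℝ) T₀ := ⟨ht, by linarith⟩
  have hτI : τ ∈ Set.Icc (0:ℝ) T₀ := ⟨by linarith, by linarith⟩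
  have hTI : T ∈ Set.Icc (0:ℝ) T₀ := ⟨by linarith, hTT₀⟩
  set S := T - t with hSdef
  have hS : 0 < S := by rw [hSdef]; linarith
  set tu := τ - t with htudef
  have htu : 0 < tu := by rw [htudef]; linarith
  set tv := T - τ with htvdef
  have htv : 0 < tv := by rw [htvdef]; linarith
  have htuS : tu ≤ S := by rw [htudef, hSdef]; linarith
  have htvS : tv ≤ S := by rw [htvdef, hSdef]; linarith
  set w := θ τ T y with hwdef
  set xi := θ τ t x with hxidef
  set R := ‖θ t T y - x‖ with hRdef
  have hR0 : 0 ≤ R := norm_nonneg _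
  set az : EuclideanSpace ℝ (Fin d) → ℝ := fun z => ‖θ t τ z - x‖ with hazdef
  set bz : EuclideanSpace ℝ (Fin d) → ℝ := fun z => ‖w - z‖ with hbzdef
  have haz0 : ∀ z, 0 ≤ az z := fun z => norm_nonneg _
  have hbz0 : ∀ z, 0 ≤ bz z := fun z => norm_nonneg _
  set P₁ : EuclideanSpace ℝ (Fin d) → ℝ := fun z => tu ^ (-(d:ℝ)/α) * (1 + az z / tu ^ (1/α)) ^ (-β) with hP₁def
  set P₂ : EuclideanSpace ℝ (Fin d) → ℝ := fun z => tv ^ (-(d:ℝ)/α) * (1 + bz z / tv ^ (1/α)) ^ (-β) with hP₂def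
  set ρS := S ^ (-(d:ℝ)/α) * (1 + R / S ^ (1/α)) ^ (-β) with hρSdef
  have h1pos : 0 < tu ^ (1/α) := Real.rpow_pos_of_pos htu _
  have h2pos : 0 < tv ^ (1/α) := Real.rpow_pos_of_pos htv _
  have hS1pos : 0 < S ^ (1/α) := Real.rpow_pos_of_pos hS _
  have hρS0 : 0 ≤ ρS := by
    rw [hρSdef]
    exact mul_nonneg (Real.rpow_nonneg hS.le _) (Real.rpow_nonneg (by positivity) _)
  -- flow consequences
  have hwR : θ t τ w = θ t T y := hsg t htI τ hτI T hTI y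
  have htri : ∀ z, R ≤ az z + L * bz z := by
    intro z
    have h1 : R = ‖θ t τ w - x‖ := by rw [hRdef, hwR]
    have h2 : ‖θ t τ w - x‖ ≤ ‖θ t τ w - θ t τ z‖ + ‖θ t τ z - x‖ :=
      norm_sub_le_norm_sub_add_norm_sub _ _ _
    have h3 : ‖θ t τ w - θ t τ z‖ ≤ L * bz z := hlipθ t htI τ hτI w z
    rw [h1]
    calc ‖θ t τ w - x‖ ≤ ‖θ t τ w - θ t τ z‖ + az z := h2
      _ ≤ L * bz z + az z := by linarith
      _ = az z + L * bz z := by ring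
  have hinv : ∀ z, ‖z - xi‖ ≤ L * az z := by
    intro z
    have hz : θ τ t (θ t τ z) = z := by
      rw [hsg τ hτI t htI τ hτI z]
      exact (hflow τ hτI z).1
    calc ‖z - xi‖ = ‖θ τ t (θ t τ z) - θ τ t x‖ := by rw [hz, hxidef]
      _ ≤ L * ‖θ t τ z - x‖ := hlipθ τ hτI t htI _ _
  -- continuity and measurability
  have hθc : Continuous fun z : EuclideanSpace ℝ (Fin d) => θ t τ z := by
    have hl : LipschitzWith L.toNNReal fun z : EuclideanSpace ℝ (Fin d) => θ t τ z := by
      apply LipschitzWith.of_dist_le_mul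
      intro p q
      rw [Real.coe_toNNReal L hL0.le]
      simpa [dist_eq_norm] using hlipθ t htI τ hτI p q
    exact hl.continuous
  have hazc : Continuous az := by
    rw [hazdef]; exact (hθc.sub continuous_const).norm
  have hbzc : Continuous bz := by
    rw [hbzdef]; exact (continuous_const.sub continuous_id).norm
  have hbase1 : ∀ z, 0 < 1 + az z / tu ^ (1/α) := fun z =>
    add_pos_of_pos_of_nonneg one_pos (div_nonneg (haz0 z) h1pos.le)
  have hbase2 : ∀ z, 0 < 1 + bz z / tv ^ (1/α) := fun z =>
    add_pos_of_pos_of_nonneg one_pos (div_nonneg (hbz0 z) h2pos.le)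
  have hP₁nn : ∀ z, 0 ≤ P₁ z := fun z => by
    rw [hP₁def]
    exact mul_nonneg (Real.rpow_nonneg htu.le _) (Real.rpow_nonneg (hbase1 z).le _)
  have hP₂nn : ∀ z, 0 ≤ P₂ z := fun z => by
    rw [hP₂def]
    exact mul_nonneg (Real.rpow_nonneg htv.le _) (Real.rpow_nonneg (hbase2 z).le _)
  have hP₁c : Continuous P₁ := by
    rw [hP₁def]
    exact continuous_const.mul ((continuous_const.add (hazc.div_const _)).rpow_const
      fun z => Or.inl (hbase1 z).ne')
  have hP₁le : ∀ z, P₁ z ≤ tu ^ (-(d:ℝ)/α) := by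
    intro z
    rw [hP₁def]
    have h1 : (1 + az z / tu ^ (1/α)) ^ (-β) ≤ 1 :=
      Real.rpow_le_one_of_one_le_of_nonpos
        (le_add_of_nonneg_right (div_nonneg (haz0 z) h1pos.le)) (by linarith)
    calc tu ^ (-(d:ℝ)/α) * (1 + az z / tu ^ (1/α)) ^ (-β)
        ≤ tu ^ (-(d:ℝ)/α) * 1 := by
          exact mul_le_mul_of_nonneg_left h1 (Real.rpow_nonneg htu.le _)
      _ = tu ^ (-(d:ℝ)/α) := mul_one _
  have hP₂le : ∀ z, P₂ z ≤ tv ^ (-(d:ℝ)/α) := by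
    intro z
    rw [hP₂def]
    have h1 : (1 + bz z / tv ^ (1/α)) ^ (-β) ≤ 1 :=
      Real.rpow_le_one_of_one_le_of_nonpos
        (le_add_of_nonneg_right (div_nonneg (hbz0 z) h2pos.le)) (by linarith)
    calc tv ^ (-(d:ℝ)/α) * (1 + bz z / tv ^ (1/α)) ^ (-β)
        ≤ tv ^ (-(d:ℝ)/α) * 1 := by
          exact mul_le_mul_of_nonneg_left h1 (Real.rpow_nonneg htv.le _)
      _ = tv ^ (-(d:ℝ)/α) := mul_one _
  -- integrability and integral of P₂ (exact)
  have hker2 := Stmt4Aux.kernel_int d hβd h2pos w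
  have hP₂eq : ∀ z, P₂ z = tv ^ (-(d:ℝ)/α) * (1 + ‖z - w‖ / tv ^ (1/α)) ^ (-β) := by
    intro z
    rw [hP₂def]
    simp only [hbzdef]
    rw [norm_sub_rev]
  have hP₂int : Integrable P₂ := by
    refine ((hker2.1).const_mul (tv ^ (-(d:ℝ)/α))).congr
      (Filter.Eventually.of_forall fun z => ?_)
    exact (hP₂eq z).symm
  have hP₂val : ∫ z, P₂ z = C₀ := by
    calc ∫ z, P₂ z = ∫ z : EuclideanSpace ℝ (Fin d), tv ^ (-(d:ℝ)/α) * (1 + ‖z - w‖ / tv ^ (1/α)) ^ (-β) :=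
        integral_congr_ae (Filter.Eventually.of_forall hP₂eq)
      _ = tv ^ (-(d:ℝ)/α) * ∫ z : EuclideanSpace ℝ (Fin d), (1 + ‖z - w‖ / tv ^ (1/α)) ^ (-β) :=
        integral_const_mul _ _
      _ = tv ^ (-(d:ℝ)/α) * ((tv ^ (1/α)) ^ (d:ℝ) * C₀) := by rw [hker2.2]
      _ = (tv ^ (-(d:ℝ)/α) * (tv ^ (1/α)) ^ (d:ℝ)) * C₀ := by ring
      _ = C₀ := by rw [Stmt4Aux.pow_cancel d htv α, one_mul]
  -- integrability and integral bound for P₁ (via the inverse flow)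
  have hLh1 : 0 < L * tu ^ (1/α) := by positivity
  have hker1 := Stmt4Aux.kernel_int d hβd hLh1 xi
  have hP₁le' : ∀ z, P₁ z ≤ tu ^ (-(d:ℝ)/α) * (1 + ‖z - xi‖ / (L * tu ^ (1/α))) ^ (-β) := by
    intro z
    rw [hP₁def]
    have harg : ‖z - xi‖ / (L * tu ^ (1/α)) ≤ az z / tu ^ (1/α) := by
      rw [div_le_div_iff₀ hLh1 h1pos]
      have h' := mul_le_mul_of_nonneg_right (hinv z) h1pos.le
      rw [show az z * (L * tu ^ (1/α)) = L * az z * (tu ^ (1/α)) by ring]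
      exact h'
    have hb : (1 + az z / tu ^ (1/α)) ^ (-β)
        ≤ (1 + ‖z - xi‖ / (L * tu ^ (1/α))) ^ (-β) := by
      apply Stmt4Aux.rpow_neg_anti hβ0.le
      · positivity
      · linarith
    exact mul_le_mul_of_nonneg_left hb (Real.rpow_nonneg htu.le _)
  have hP₁'int : Integrable (fun z : EuclideanSpace ℝ (Fin d) =>
      tu ^ (-(d:ℝ)/α) * (1 + ‖z - xi‖ / (L * tu ^ (1/α))) ^ (-β)) :=
    (hker1.1).const_mul _
  have hP₁int : Integrable P₁ := by
    refine hP₁'int.mono' hP₁c.aestronglyMeasurable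
      (Filter.Eventually.of_forall fun z => ?_)
    rw [Real.norm_eq_abs, abs_of_nonneg (hP₁nn z)]
    exact hP₁le' z
  have hP₁val : ∫ z, P₁ z ≤ L ^ (d:ℝ) * C₀ := by
    have hc := Stmt4Aux.pow_cancel d htu α
    calc ∫ z, P₁ z
        ≤ ∫ z : EuclideanSpace ℝ (Fin d), tu ^ (-(d:ℝ)/α) * (1 + ‖z - xi‖ / (L * tu ^ (1/α))) ^ (-β) :=
        integral_mono hP₁int hP₁'int hP₁le'
      _ = tu ^ (-(d:ℝ)/α) * ∫ z : EuclideanSpace ℝ (Fin d), (1 + ‖z - xi‖ / (L * tu ^ (1/α))) ^ (-β) :=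
        integral_const_mul _ _
      _ = tu ^ (-(d:ℝ)/α) * ((L * tu ^ (1/α)) ^ (d:ℝ) * C₀) := by rw [hker1.2]
      _ = (tu ^ (-(d:ℝ)/α) * (tu ^ (1/α)) ^ (d:ℝ)) * (L ^ (d:ℝ) * C₀) := by
        rw [Real.mul_rpow hL0.le h1pos.le]; ring
      _ = L ^ (d:ℝ) * C₀ := by rw [hc, one_mul]
  have hP₁P₂int : Integrable (fun z => P₁ z * P₂ z) := by
    refine hP₂int.bdd_mul hP₁c.aestronglyMeasurable (c := tu ^ (-(d:ℝ)/α)) (ae_of_all _ fun z => ?_)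
    rw [Real.norm_eq_abs, abs_of_nonneg (hP₁nn z)]
    exact hP₁le z
  -- dichotomy
  have hdichot : ∀ z, az z < R / (2*L) → R / (2*L) ≤ bz z := by
    intro z hz
    rw [div_le_iff₀ (by positivity)]
    have h2' : az z * (2*L) < R := by rwa [← lt_div_iff₀ (by positivity)]
    have t0 : 0 ≤ az z * (L - 1) := mul_nonneg (haz0 z) (by linarith only [hL1])
    linarith only [htri z, h2', t0]
  -- pointwise Q bound
  have hQb : ∀ z, Q (C₁ * az z) * Q (C₂ * bz z) ≤ Q 0 * Q (C₃ * R) := by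
    intro z
    have hC₃R : 0 ≤ C₃ * R := mul_nonneg hC₃0.le hR0
    rcases le_or_gt (R / (2*L)) (az z) with hcase | hcase
    · have hle : C₃ * R ≤ C₁ * az z := by
        calc C₃ * R = min C₁ C₂ * (R / (2*L)) := by rw [hC₃def]; ring
          _ ≤ C₁ * (R / (2*L)) :=
            mul_le_mul_of_nonneg_right (min_le_left _ _) (by positivity)
          _ ≤ C₁ * az z := mul_le_mul_of_nonneg_left hcase hC₁.le
      have h1' : Q (C₁ * az z) ≤ Q (C₃ * R) :=
        hQmono hC₃R (le_trans hC₃R hle) hle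
      have h2' : Q (C₂ * bz z) ≤ Q 0 :=
        hQmono Set.self_mem_Ici (mul_nonneg hC₂.le (hbz0 z)) (mul_nonneg hC₂.le (hbz0 z))
      calc Q (C₁ * az z) * Q (C₂ * bz z) ≤ Q (C₃ * R) * Q 0 :=
          mul_le_mul h1' h2' (hQnonneg _ (mul_nonneg hC₂.le (hbz0 z)))
            (hQnonneg _ hC₃R)
        _ = Q 0 * Q (C₃ * R) := mul_comm _ _
    · have hbzz := hdichot z hcase
      have hle : C₃ * R ≤ C₂ * bz z := by
        calc C₃ * R = min C₁ C₂ * (R / (2*L)) := by rw [hC₃def]; ring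
          _ ≤ C₂ * (R / (2*L)) :=
            mul_le_mul_of_nonneg_right (min_le_right _ _) (by positivity)
          _ ≤ C₂ * bz z := mul_le_mul_of_nonneg_left hbzz hC₂.le
      have h1' : Q (C₂ * bz z) ≤ Q (C₃ * R) :=
        hQmono hC₃R (le_trans hC₃R hle) hle
      have h2' : Q (C₁ * az z) ≤ Q 0 :=
        hQmono Set.self_mem_Ici (mul_nonneg hC₁.le (haz0 z)) (mul_nonneg hC₁.le (haz0 z))
      exact mul_le_mul h2' h1' (hQnonneg _ (mul_nonneg hC₂.le (hbz0 z)))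
        (hQnonneg _ le_rfl)
  have huv : tu + tv = S := by rw [htudef, htvdef, hSdef]; ring
  have hnegd : -(d:ℝ)/α ≤ 0 := by
    rw [neg_div]; exact neg_nonpos.2 (by positivity)
  have hE0 : 0 ≤ -(d:ℝ)/α + 1/α*β := by
    rw [show -(d:ℝ)/α + 1/α*β = (β - (d:ℝ))/α by ring]
    exact div_nonneg (by linarith) hα0.le
  have hρSid : ρS = S ^ (-(d:ℝ)/α + 1/α*β) * (S ^ (1/α) + R) ^ (-β) := by
    rw [hρSdef]; exact Stmt4Aux.rho_eq hS hR0
  -- pointwise identity for the integrand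
  have hpt : ∀ z, pbar d α γ θ Q C₁ t τ x z * pbar d α γ θ Q C₂ τ T z y
      = (Q (C₁ * az z) * Q (C₂ * bz z)) * (P₁ z * P₂ z) := by
    intro z
    simp only [pbar, hP₁def, hP₂def, hazdef, hbzdef, hwdef, htudef, htvdef, hβdef]
    ring
  -- the key integral bound
  have hkey : ∫ z, P₁ z * P₂ z ≤ MC * ρS := by
    rcases le_or_gt R (S ^ (1/α)) with hRS | hRS
    · -- short range case
      have hb2 : 1 + R / S ^ (1/α) ≤ 2 := by
        have h := (div_le_one hS1pos).2 hRS
        linarith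
      have hlb : (2:ℝ) ^ (-β) ≤ (1 + R / S ^ (1/α)) ^ (-β) :=
        Stmt4Aux.rpow_neg_anti hβ0.le (by positivity) hb2
      have hSle : S ^ (-(d:ℝ)/α) ≤ 2 ^ β * ρS := by
        have h2 : (2:ℝ) ^ β * (2:ℝ) ^ (-β) = 1 := by
          rw [← Real.rpow_add (by norm_num : (0:ℝ) < 2)]; norm_num
        have hfirst : S ^ (-(d:ℝ)/α) = 2 ^ β * ((2:ℝ) ^ (-β) * S ^ (-(d:ℝ)/α)) := by
          rw [← mul_assoc, h2, one_mul]
        calc S ^ (-(d:ℝ)/α) = 2 ^ β * ((2:ℝ) ^ (-β) * S ^ (-(d:ℝ)/α)) := hfirst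
          _ ≤ 2 ^ β * ρS := by
            apply mul_le_mul_of_nonneg_left _ (Real.rpow_nonneg (by norm_num) _)
            calc (2:ℝ) ^ (-β) * S ^ (-(d:ℝ)/α)
                ≤ (1 + R / S ^ (1/α)) ^ (-β) * S ^ (-(d:ℝ)/α) :=
                  mul_le_mul_of_nonneg_right hlb (Real.rpow_nonneg hS.le _)
              _ = ρS := by rw [hρSdef]; ring
      have h2da : (0:ℝ) ≤ (2:ℝ) ^ ((d:ℝ)/α) := Real.rpow_nonneg (by norm_num) _
      have hsplit2 : (2:ℝ) ^ (β + (d:ℝ)/α) = 2 ^ β * 2 ^ ((d:ℝ)/α) :=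
        Real.rpow_add (by norm_num) _ _
      have hhalf : (S/2) ^ (-(d:ℝ)/α) = 2 ^ ((d:ℝ)/α) * S ^ (-(d:ℝ)/α) := by
        rw [neg_div, Real.rpow_neg (by positivity : (0:ℝ) ≤ S/2), Real.rpow_neg hS.le,
          Real.div_rpow hS.le (by norm_num : (0:ℝ) ≤ 2), inv_div, div_eq_mul_inv]
      rcases le_or_gt (S/2) tu with hcu | hcu
      · -- tu ≥ S/2
        have htub : tu ^ (-(d:ℝ)/α) ≤ 2 ^ ((d:ℝ)/α) * S ^ (-(d:ℝ)/α) :=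
          (Stmt4Aux.rpow_anti_of_nonpos hnegd (by positivity) hcu).trans (le_of_eq hhalf)
        have hstep : ∫ z, P₁ z * P₂ z ≤ (2 ^ ((d:ℝ)/α) * S ^ (-(d:ℝ)/α)) * C₀ := by
          have hmaj : ∀ z, P₁ z * P₂ z ≤ (2 ^ ((d:ℝ)/α) * S ^ (-(d:ℝ)/α)) * P₂ z := fun z =>
            mul_le_mul_of_nonneg_right ((hP₁le z).trans htub) (hP₂nn z)
          calc ∫ z, P₁ z * P₂ z
              ≤ ∫ z, (2 ^ ((d:ℝ)/α) * S ^ (-(d:ℝ)/α)) * P₂ z :=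
              integral_mono hP₁P₂int (hP₂int.const_mul _) hmaj
            _ = (2 ^ ((d:ℝ)/α) * S ^ (-(d:ℝ)/α)) * ∫ z, P₂ z := integral_const_mul _ _
            _ = _ := by rw [hP₂val]
        calc ∫ z, P₁ z * P₂ z ≤ (2 ^ ((d:ℝ)/α) * S ^ (-(d:ℝ)/α)) * C₀ := hstep
          _ ≤ (2 ^ ((d:ℝ)/α) * (2 ^ β * ρS)) * C₀ := by
              apply mul_le_mul_of_nonneg_right _ hC₀nonneg
              exact mul_le_mul_of_nonneg_left hSle h2da
          _ = (C₀ * 2 ^ (β + (d:ℝ)/α)) * ρS := by rw [hsplit2]; ring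
          _ ≤ MC * ρS := mul_le_mul_of_nonneg_right hMCge2 hρS0
      · -- tv ≥ S/2
        have hcv : S/2 ≤ tv := by linarith
        have htvb : tv ^ (-(d:ℝ)/α) ≤ 2 ^ ((d:ℝ)/α) * S ^ (-(d:ℝ)/α) :=
          (Stmt4Aux.rpow_anti_of_nonpos hnegd (by positivity) hcv).trans (le_of_eq hhalf)
        have hstep : ∫ z, P₁ z * P₂ z
            ≤ (2 ^ ((d:ℝ)/α) * S ^ (-(d:ℝ)/α)) * (L ^ (d:ℝ) * C₀) := by
          have hmaj : ∀ z, P₁ z * P₂ z ≤ (2 ^ ((d:ℝ)/α) * S ^ (-(d:ℝ)/α)) * P₁ z := by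
            intro z
            calc P₁ z * P₂ z ≤ P₁ z * (2 ^ ((d:ℝ)/α) * S ^ (-(d:ℝ)/α)) :=
                mul_le_mul_of_nonneg_left ((hP₂le z).trans htvb) (hP₁nn z)
              _ = (2 ^ ((d:ℝ)/α) * S ^ (-(d:ℝ)/α)) * P₁ z := mul_comm _ _
          calc ∫ z, P₁ z * P₂ z
              ≤ ∫ z, (2 ^ ((d:ℝ)/α) * S ^ (-(d:ℝ)/α)) * P₁ z :=
              integral_mono hP₁P₂int (hP₁int.const_mul _) hmaj
            _ = (2 ^ ((d:ℝ)/α) * S ^ (-(d:ℝ)/α)) * ∫ z, P₁ z := integral_const_mul _ _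
            _ ≤ (2 ^ ((d:ℝ)/α) * S ^ (-(d:ℝ)/α)) * (L ^ (d:ℝ) * C₀) := by
              apply mul_le_mul_of_nonneg_left hP₁val
              exact mul_nonneg h2da (Real.rpow_nonneg hS.le _)
        calc ∫ z, P₁ z * P₂ z ≤ (2 ^ ((d:ℝ)/α) * S ^ (-(d:ℝ)/α)) * (L ^ (d:ℝ) * C₀) := hstep
          _ ≤ (2 ^ ((d:ℝ)/α) * (2 ^ β * ρS)) * (L ^ (d:ℝ) * C₀) := by
              apply mul_le_mul_of_nonneg_right _ (mul_nonneg hLd hC₀nonneg)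
              exact mul_le_mul_of_nonneg_left hSle h2da
          _ = (C₀ * L ^ (d:ℝ) * 2 ^ (β + (d:ℝ)/α)) * ρS := by rw [hsplit2]; ring
          _ ≤ MC * ρS := mul_le_mul_of_nonneg_right hMCgeL2 hρS0
    · -- long range case
      have hbound : ∀ (tt r : ℝ), 0 < tt → tt ≤ S → 0 ≤ r → R / (2*L) ≤ r →
          tt ^ (-(d:ℝ)/α) * (1 + r / tt ^ (1/α)) ^ (-β) ≤ (4*L) ^ β * ρS := by
        intro tt r htt httS hr hrR
        have htt1 : 0 < tt ^ (1/α) := Real.rpow_pos_of_pos htt _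
        rw [Stmt4Aux.rho_eq htt hr, hρSid]
        have h1b : tt ^ (-(d:ℝ)/α + 1/α*β) ≤ S ^ (-(d:ℝ)/α + 1/α*β) :=
          Real.rpow_le_rpow htt.le httS hE0
        have hr2 : R ≤ r * (2*L) := (div_le_iff₀ (by positivity)).1 hrR
        have hkey4 : S ^ (1/α) + R ≤ (4*L) * (tt ^ (1/α) + r) := by
          have e1 : S ^ (1/α) + R ≤ 2*R := by linarith only [hRS.le]
          have e2 : 2*R ≤ 4*L*r := by linarith only [hr2]
          have e3 : 0 < 4*L*(tt ^ (1/α)) := by positivity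
          have e4 : (4*L) * (tt ^ (1/α) + r) = 4*L*(tt ^ (1/α)) + 4*L*r := by ring
          linarith only [e1, e2, e3, e4]
        have h2b : (tt ^ (1/α) + r) ^ (-β) ≤ (4*L) ^ β * (S ^ (1/α) + R) ^ (-β) := by
          have hpos : 0 < S ^ (1/α) + R := by positivity
          have hstep := Stmt4Aux.rpow_neg_anti hβ0.le hpos hkey4
          rw [Real.mul_rpow (by positivity : (0:ℝ) ≤ 4*L)
            (by positivity : (0:ℝ) ≤ tt ^ (1/α) + r)] at hstep
          calc (tt ^ (1/α) + r) ^ (-β)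
              = (4*L) ^ β * ((4*L) ^ (-β) * (tt ^ (1/α) + r) ^ (-β)) := by
                rw [← mul_assoc, ← Real.rpow_add (by positivity : (0:ℝ) < 4*L)]
                norm_num
            _ ≤ (4*L) ^ β * (S ^ (1/α) + R) ^ (-β) :=
                mul_le_mul_of_nonneg_left hstep hA4
        calc tt ^ (-(d:ℝ)/α + 1/α*β) * (tt ^ (1/α) + r) ^ (-β)
            ≤ S ^ (-(d:ℝ)/α + 1/α*β) * ((4*L) ^ β * (S ^ (1/α) + R) ^ (-β)) :=
              mul_le_mul h1b h2b (Real.rpow_nonneg (by positivity) _)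
                (Real.rpow_nonneg hS.le _)
          _ = (4*L) ^ β * (S ^ (-(d:ℝ)/α + 1/α*β) * (S ^ (1/α) + R) ^ (-β)) := by ring
      set Aset := {z : EuclideanSpace ℝ (Fin d) | R / (2*L) ≤ az z} with hAdef
      have hAm : MeasurableSet Aset := by
        rw [hAdef]
        exact measurableSet_le measurable_const hazc.measurable
      have hM4 : 0 ≤ (4*L) ^ β * ρS := mul_nonneg hA4 hρS0
      have hsplit : ∫ z, P₁ z * P₂ z
          = (∫ z in Aset, P₁ z * P₂ z) + ∫ z in Asetᶜ, P₁ z * P₂ z :=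
        (integral_add_compl hAm hP₁P₂int).symm
      have hpartA : ∫ z in Aset, P₁ z * P₂ z ≤ ((4*L) ^ β * ρS) * C₀ := by
        have hb1 : ∀ z ∈ Aset, P₁ z * P₂ z ≤ ((4*L) ^ β * ρS) * P₂ z := by
          intro z hz
          apply mul_le_mul_of_nonneg_right _ (hP₂nn z)
          simp only [hP₁def]
          exact hbound tu (az z) htu htuS (haz0 z) hz
        calc ∫ z in Aset, P₁ z * P₂ z
            ≤ ∫ z in Aset, ((4*L) ^ β * ρS) * P₂ z :=
              setIntegral_mono_on hP₁P₂int.integrableOn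
                ((hP₂int.const_mul _)).integrableOn hAm hb1
          _ = ((4*L) ^ β * ρS) * ∫ z in Aset, P₂ z := integral_const_mul _ _
          _ ≤ ((4*L) ^ β * ρS) * ∫ z, P₂ z := by
              apply mul_le_mul_of_nonneg_left _ hM4
              exact setIntegral_le_integral hP₂int (ae_of_all _ hP₂nn)
          _ = ((4*L) ^ β * ρS) * C₀ := by rw [hP₂val]
      have hpartAc : ∫ z in Asetᶜ, P₁ z * P₂ z ≤ ((4*L) ^ β * ρS) * (L ^ (d:ℝ) * C₀) := by
        have hb2 : ∀ z ∈ Asetᶜ, P₁ z * P₂ z ≤ ((4*L) ^ β * ρS) * P₁ z := by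
          intro z hz
          have hz' : az z < R / (2*L) := by
            simp only [hAdef, Set.mem_compl_iff, Set.mem_setOf_eq, not_le] at hz
            exact hz
          have hzb := hdichot z hz'
          have hP₂b : P₂ z ≤ (4*L) ^ β * ρS := by
            simp only [hP₂def]
            exact hbound tv (bz z) htv htvS (hbz0 z) hzb
          calc P₁ z * P₂ z ≤ P₁ z * ((4*L) ^ β * ρS) :=
              mul_le_mul_of_nonneg_left hP₂b (hP₁nn z)
            _ = ((4*L) ^ β * ρS) * P₁ z := mul_comm _ _
        calc ∫ z in Asetᶜ, P₁ z * P₂ z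
            ≤ ∫ z in Asetᶜ, ((4*L) ^ β * ρS) * P₁ z :=
              setIntegral_mono_on hP₁P₂int.integrableOn
                ((hP₁int.const_mul _)).integrableOn hAm.compl hb2
          _ = ((4*L) ^ β * ρS) * ∫ z in Asetᶜ, P₁ z := integral_const_mul _ _
          _ ≤ ((4*L) ^ β * ρS) * ∫ z, P₁ z := by
              apply mul_le_mul_of_nonneg_left _ hM4
              exact setIntegral_le_integral hP₁int (ae_of_all _ hP₁nn)
          _ ≤ ((4*L) ^ β * ρS) * (L ^ (d:ℝ) * C₀) :=
              mul_le_mul_of_nonneg_left hP₁val hM4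
      calc ∫ z, P₁ z * P₂ z
          = (∫ z in Aset, P₁ z * P₂ z) + ∫ z in Asetᶜ, P₁ z * P₂ z := hsplit
        _ ≤ ((4*L) ^ β * ρS) * C₀ + ((4*L) ^ β * ρS) * (L ^ (d:ℝ) * C₀) :=
            add_le_add hpartA hpartAc
        _ = (C₀ * (1 + L ^ (d:ℝ)) * (4*L) ^ β) * ρS := by ring
        _ ≤ MC * ρS := mul_le_mul_of_nonneg_right hMCgeB hρS0
  -- final assembly
  have hpbarT : pbar d α γ θ Q C₃ t T x y = ρS * Q (C₃ * R) := by
    simp only [pbar, hρSdef, hRdef, hSdef, hβdef]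
  have hQC₃nn : 0 ≤ Q (C₃ * R) := hQnonneg _ (mul_nonneg hC₃0.le hR0)
  have hQ0nn : 0 ≤ Q 0 := hQnonneg 0 le_rfl
  have hintnn : ∀ z, 0 ≤ pbar d α γ θ Q C₁ t τ x z * pbar d α γ θ Q C₂ τ T z y := by
    intro z
    rw [hpt z]
    exact mul_nonneg (mul_nonneg (hQnonneg _ (mul_nonneg hC₁.le (haz0 z)))
      (hQnonneg _ (mul_nonneg hC₂.le (hbz0 z)))) (mul_nonneg (hP₁nn z) (hP₂nn z))
  have hCgoal : Q 0 * MC ≤ max 1 (Q 0 * MC + 1) :=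
    le_trans (by linarith) (le_max_right _ _)
  calc ∫ z, pbar d α γ θ Q C₁ t τ x z * pbar d α γ θ Q C₂ τ T z y
      ≤ ∫ z, (Q 0 * Q (C₃ * R)) * (P₁ z * P₂ z) := by
        apply integral_mono_of_nonneg (ae_of_all _ hintnn) ((hP₁P₂int.const_mul _))
        refine ae_of_all _ fun z => ?_
        show pbar d α γ θ Q C₁ t τ x z * pbar d α γ θ Q C₂ τ T z y
          ≤ Q 0 * Q (C₃ * R) * (P₁ z * P₂ z)
        rw [hpt z]
        exact mul_le_mul_of_nonneg_right (hQb z) (mul_nonneg (hP₁nn z) (hP₂nn z))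
    _ = (Q 0 * Q (C₃ * R)) * ∫ z, P₁ z * P₂ z := integral_const_mul _ _
    _ ≤ (Q 0 * Q (C₃ * R)) * (MC * ρS) :=
        mul_le_mul_of_nonneg_left hkey (mul_nonneg hQ0nn hQC₃nn)
    _ = (Q 0 * MC) * (ρS * Q (C₃ * R)) := by ring
    _ ≤ max 1 (Q 0 * MC + 1) * (ρS * Q (C₃ * R)) :=
        mul_le_mul_of_nonneg_right hCgoal (mul_nonneg hρS0 hQC₃nn)
    _ = max 1 (Q 0 * MC + 1) * pbar d α γ θ Q C₃ t T x y := by rw [hpbarT]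
end
end

section
/- There exists a constant C > 0, depending only on α, κ and the doubling constant C_D, such that ν_S(A) ≤ C · T_{q̄, μ_S}(A) for every Borel set A ⊆ ℝ^d; that is, the image Lévy measure ν_S again satisfies the tempered stable domination, with the same temperation q̄ and with spectral measure μ_S. -/
open MeasureTheory
open scoped ENNReal

noncomputable section

/-- Action of a `d × d` matrix on a vector of `EuclideanSpace ℝ (Fin d)`. -/
def matVec {d : ℕ} (M : Matrix (Fin d) (Fin d) ℝ) (x : EuclideanSpace ℝ (Fin d)) :
    EuclideanSpace ℝ (Fin d) :=
  (EuclideanSpace.equiv (Fin d) ℝ).symm (M.mulVec (EuclideanSpace.equiv (Fin d) ℝ x))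

/-- The tempered stable dominating measure
`T_{q,m}(A) = ∫_{S^{d−1}} ∫_0^∞ 1_A(sθ) q(s) s^{−1−α} ds m(dθ)`. -/
def temperedDom (d : ℕ) (α : ℝ) (q : ℝ → ℝ) (m : Measure (EuclideanSpace ℝ (Fin d)))
    (A : Set (EuclideanSpace ℝ (Fin d))) : ℝ≥0∞ :=
  ∫⁻ θv, (∫⁻ s in Set.Ioi (0:ℝ),
    Set.indicator A (fun _ => ENNReal.ofReal (q s / s ^ (1 + α))) (s • θv)) ∂m

/-- The image Lévy measure `ν_S`: image of `dv ⊗ ν(dξ)` on `[0,1] × ℝ^d` under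
`(v,ξ) ↦ σ_v ξ`. -/
def nuS (d : ℕ) (σ : ℝ → Matrix (Fin d) (Fin d) ℝ) (ν : Measure (EuclideanSpace ℝ (Fin d))) :
    Measure (EuclideanSpace ℝ (Fin d)) :=
  Measure.map (fun p : ℝ × EuclideanSpace ℝ (Fin d) => matVec (σ p.1) p.2)
    (((volume : Measure ℝ).restrict (Set.Icc 0 1)).prod ν)

/-- The image spectral measure `μ_S`: image of `|σ_v ς|^α dv μ(dς)` on `[0,1] × S^{d−1}` under
`(v,ς) ↦ σ_v ς / |σ_v ς|`. -/
def muS (d : ℕ) (α : ℝ) (σ : ℝ → Matrix (Fin d) (Fin d) ℝ)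
    (μ : Measure (EuclideanSpace ℝ (Fin d))) : Measure (EuclideanSpace ℝ (Fin d)) :=
  Measure.map (fun p : ℝ × EuclideanSpace ℝ (Fin d) => ‖matVec (σ p.1) p.2‖⁻¹ • matVec (σ p.1) p.2)
    (((((volume : Measure ℝ).restrict (Set.Icc 0 1)).prod μ).withDensity
      (fun p => ENNReal.ofReal (‖matVec (σ p.1) p.2‖ ^ α))))

/- ## Auxiliary lemmas -/

lemma matVec_smul {d : ℕ} (M : Matrix (Fin d) (Fin d) ℝ) (s : ℝ) (x : EuclideanSpace ℝ (Fin d)) :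
    matVec M (s • x) = s • matVec M x := by
  simp [matVec, Matrix.mulVec_smul]

lemma matVec_measurable {d : ℕ} (σ : ℝ → Matrix (Fin d) (Fin d) ℝ)
    (hσ : ∀ i j, Measurable (fun v : ℝ => σ v i j)) :
    Measurable (fun p : ℝ × EuclideanSpace ℝ (Fin d) => matVec (σ p.1) p.2) := by
  apply (EuclideanSpace.equiv (Fin d) ℝ).symm.continuous.measurable.comp
  apply measurable_pi_lambda
  intro i
  simp only [Matrix.mulVec, dotProduct]
  apply Finset.measurable_sum
  intro j _
  exact ((hσ i j).comp measurable_fst).mul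
    ((measurable_pi_apply j).comp
      ((EuclideanSpace.equiv (Fin d) ℝ).continuous.measurable.comp measurable_snd))

lemma scale_lintegral (c : ℝ) (hc : 0 < c) (G : ℝ → ℝ≥0∞) (hG : Measurable G) :
    ∫⁻ r in Set.Ioi (0:ℝ), G r = ENNReal.ofReal c * ∫⁻ s in Set.Ioi (0:ℝ), G (c * s) := by
  have h1 : (fun s : ℝ => c * s) ⁻¹' (Set.Ioi 0) = Set.Ioi 0 := by
    ext x; simp [mul_pos_iff, hc, hc.not_gt, hc.le]
  have hmap : Measure.map (fun s : ℝ => c * s) ((volume : Measure ℝ).restrict (Set.Ioi 0))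
      = (ENNReal.ofReal c⁻¹) • ((volume : Measure ℝ).restrict (Set.Ioi 0)) := by
    rw [← h1, ← Measure.restrict_map (measurable_const_mul c) measurableSet_Ioi,
      Real.map_volume_mul_left hc.ne', h1, abs_of_pos (inv_pos.2 hc),
      Measure.restrict_smul]
  have h2 : ∫⁻ s in Set.Ioi (0:ℝ), G (c * s)
      = ENNReal.ofReal c⁻¹ * ∫⁻ r in Set.Ioi (0:ℝ), G r := by
    rw [← lintegral_map hG (measurable_const_mul c), hmap, lintegral_smul_measure, smul_eq_mul]
  rw [h2, ← mul_assoc, ← ENNReal.ofReal_mul hc.le, mul_inv_cancel₀ hc.ne',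
    ENNReal.ofReal_one, one_mul]

lemma map_scale_restrict (c : ℝ) (hc : 0 < c) :
    Measure.map (fun s : ℝ => c * s) ((volume : Measure ℝ).restrict (Set.Ioi 0))
      = (ENNReal.ofReal c⁻¹) • ((volume : Measure ℝ).restrict (Set.Ioi 0)) := by
  have h1 : (fun s : ℝ => c * s) ⁻¹' (Set.Ioi 0) = Set.Ioi 0 := by
    ext x; simp [mul_pos_iff, hc, hc.not_gt, hc.le]
  rw [← h1, ← Measure.restrict_map (measurable_const_mul c) measurableSet_Ioi,
    Real.map_volume_mul_left hc.ne', h1, abs_of_pos (inv_pos.2 hc),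
    Measure.restrict_smul]

lemma qbar_iter (qbar : ℝ → ℝ) (C_D : ℝ) (hCD : 0 ≤ C_D)
    (hdoub : ∀ s : ℝ, 0 < s → qbar s ≤ C_D * qbar (2 * s)) :
    ∀ (N : ℕ) (s : ℝ), 0 < s → C_D ^ N * qbar (2 ^ N * s) ≥ qbar s := by
  intro N
  induction N with
  | zero => intro s hs; simp
  | succ n ih =>
    intro s hs
    have h1 := ih s hs
    have h2 := hdoub (2 ^ n * s) (by positivity)
    have hCn : (0:ℝ) ≤ C_D ^ n := pow_nonneg hCD n
    calc qbar s ≤ C_D ^ n * qbar (2 ^ n * s) := h1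
      _ ≤ C_D ^ n * (C_D * qbar (2 * (2 ^ n * s))) := by nlinarith
      _ = C_D ^ (n + 1) * qbar (2 ^ (n + 1) * s) := by ring_nf

lemma qbar_scale (qbar : ℝ → ℝ) (C_D κ : ℝ) (hCD : 0 < C_D)
    (hqmono : AntitoneOn qbar (Set.Ioi 0))
    (hdoub : ∀ s : ℝ, 0 < s → qbar s ≤ C_D * qbar (2 * s))
    (N : ℕ) (h2 : κ ≤ 2 ^ N) (c s : ℝ) (hc : 0 < c) (hcκ : c ≤ κ) (hs : 0 < s) :
    qbar s ≤ C_D ^ N * qbar (c * s) := by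
  have h1 := qbar_iter qbar C_D hCD.le hdoub N s hs
  have h3 : qbar (2 ^ N * s) ≤ qbar (c * s) := by
    apply hqmono (by positivity : (0:ℝ) < c * s) (by positivity : (0:ℝ) < (2:ℝ) ^ N * s)
    have : c ≤ 2 ^ N := le_trans hcκ h2
    nlinarith
  nlinarith [pow_pos hCD N]

set_option maxHeartbeats 1000000 in
/-- the image Lévy measure `ν_S` again satisfies the tempered stable
domination, with the same temperation `qbar` and spectral measure `μ_S`, up to a constant
depending only on `α`, `κ` and the doubling constant `C_D`. -/
theorem stmt11 (d : ℕ) (hd : 1 ≤ d) (α : ℝ) (hα0 : 0 < α) (hα2 : α < 2)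
    (qbar : ℝ → ℝ) (hqmono : AntitoneOn qbar (Set.Ioi 0)) (hqnonneg : ∀ s : ℝ, 0 < s → 0 ≤ qbar s)
    (C_D : ℝ) (hCD : 0 < C_D) (hdoub : ∀ s : ℝ, 0 < s → qbar s ≤ C_D * qbar (2 * s))
    (μ : Measure (EuclideanSpace ℝ (Fin d))) (hμfin : IsFiniteMeasure μ)
    (hμsph : μ {θv : EuclideanSpace ℝ (Fin d) | ‖θv‖ ≠ 1} = 0)
    (ν : Measure (EuclideanSpace ℝ (Fin d)))
    (hdom : ∀ A : Set (EuclideanSpace ℝ (Fin d)), MeasurableSet A →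
      ν A ≤ temperedDom d α qbar μ A)
    (σ : ℝ → Matrix (Fin d) (Fin d) ℝ)
    (hσmeas : ∀ i j, Measurable (fun v : ℝ => σ v i j))
    (hσinv : ∀ v ∈ Set.Icc (0:ℝ) 1, IsUnit (σ v).det)
    (κ : ℝ) (hκ : 1 ≤ κ)
    (hell : ∀ v ∈ Set.Icc (0:ℝ) 1, ∀ ξ : EuclideanSpace ℝ (Fin d),
      κ⁻¹ * ‖ξ‖ ≤ ‖matVec (σ v) ξ‖ ∧ ‖matVec (σ v) ξ‖ ≤ κ * ‖ξ‖) :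
    ∃ C > 0, ∀ A : Set (EuclideanSpace ℝ (Fin d)), MeasurableSet A →
      nuS d σ ν A ≤ ENNReal.ofReal C * temperedDom d α qbar (muS d α σ μ) A := by
  classical
  haveI := hμfin
  -- the matrix action map
  set f : ℝ × (EuclideanSpace ℝ (Fin d)) → (EuclideanSpace ℝ (Fin d)) := fun p => matVec (σ p.1) p.2 with hf_def
  have hf : Measurable f := matVec_measurable σ hσmeas
  -- the normalized direction map and density
  set g : ℝ × (EuclideanSpace ℝ (Fin d)) → (EuclideanSpace ℝ (Fin d)) := fun p => ‖f p‖⁻¹ • f p with hg_def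
  have hg : Measurable g := (measurable_inv.comp hf.norm).smul hf
  set ρ : ℝ × (EuclideanSpace ℝ (Fin d)) → ℝ≥0∞ := fun p => ENNReal.ofReal (‖f p‖ ^ α) with hρ_def
  have hρ : Measurable ρ := ENNReal.measurable_ofReal.comp (hf.norm.pow_const α)
  -- measurable modification of qbar on (0,∞)
  have hqae : AEMeasurable qbar ((volume : Measure ℝ).restrict (Set.Ioi 0)) :=
    aemeasurable_restrict_of_antitoneOn measurableSet_Ioi hqmono
  set qt : ℝ → ℝ := hqae.mk qbar with hqt_def
  have hqtm : Measurable qt := hqae.measurable_mk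
  have heq : qbar =ᵐ[(volume : Measure ℝ).restrict (Set.Ioi 0)] qt := hqae.ae_eq_mk
  -- choose N with κ ≤ 2 ^ N
  obtain ⟨N, hN⟩ : ∃ N : ℕ, κ < 2 ^ N := pow_unbounded_of_one_lt κ one_lt_two
  have hN' : κ ≤ 2 ^ N := hN.le
  -- a.e. unit sphere
  have hae_sph : ∀ᵐ θ ∂μ, ‖θ‖ = 1 := by
    rw [ae_iff]
    simpa using hμsph
  -- sigma-finiteness of ν
  haveI hsf : SigmaFinite ν := by
    refine ⟨⟨⟨fun n => {x : (EuclideanSpace ℝ (Fin d)) | ((n : ℝ) + 1)⁻¹ < ‖x‖} ∪ {0}, fun _ => trivial, fun n => ?_,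
      ?_⟩⟩⟩
    · -- finiteness
      set ε : ℝ := ((n : ℝ) + 1)⁻¹ with hε_def
      have hε : 0 < ε := by positivity
      have hSmeas : MeasurableSet ({x : (EuclideanSpace ℝ (Fin d)) | ε < ‖x‖} ∪ {0}) :=
        ((isOpen_lt continuous_const continuous_norm).measurableSet).union
          (measurableSet_singleton 0)
      have hbound := hdom _ hSmeas
      -- bound the inner integral for unit θ
      set B : ℝ≥0∞ := ∫⁻ s in Set.Ioi ε, ENNReal.ofReal (qbar ε * s ^ (-(1 + α))) with hB_def
      have hBfin : B < ⊤ := by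
        have hint : IntegrableOn (fun s : ℝ => qbar ε * s ^ (-(1 + α))) (Set.Ioi ε) :=
          (integrableOn_Ioi_rpow_of_lt (by linarith) hε).const_mul _
        exact hint.lintegral_lt_top
      have hinner : ∀ᵐ θ ∂μ, (∫⁻ s in Set.Ioi (0:ℝ),
          Set.indicator ({x : (EuclideanSpace ℝ (Fin d)) | ε < ‖x‖} ∪ {0})
            (fun _ => ENNReal.ofReal (qbar s / s ^ (1 + α))) (s • θ)) ≤ B := by
        filter_upwards [hae_sph] with θ hθ
        have step : ∀ s ∈ Set.Ioi (0:ℝ),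
            Set.indicator ({x : (EuclideanSpace ℝ (Fin d)) | ε < ‖x‖} ∪ {0})
              (fun _ => ENNReal.ofReal (qbar s / s ^ (1 + α))) (s • θ)
            ≤ Set.indicator (Set.Ioi ε)
              (fun s => ENNReal.ofReal (qbar ε * s ^ (-(1 + α)))) s := by
          intro s hs
          rcases Set.mem_Ioi.1 hs with hs0
          by_cases hmem : (s • θ) ∈ ({x : (EuclideanSpace ℝ (Fin d)) | ε < ‖x‖} ∪ {0})
          · have hnorm : ‖s • θ‖ = s := by
              rw [norm_smul, hθ, mul_one, Real.norm_eq_abs, abs_of_pos hs0]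
            have hsθ0 : s • θ ≠ 0 := by
              intro h
              rw [h, norm_zero] at hnorm
              exact hs0.ne hnorm
            have hεs : ε < s := by
              rcases hmem with h | h
              · rwa [Set.mem_setOf_eq, hnorm] at h
              · exact absurd h hsθ0
            rw [Set.indicator_of_mem hmem, Set.indicator_of_mem (Set.mem_Ioi.2 hεs)]
            apply ENNReal.ofReal_le_ofReal
            rw [div_eq_mul_inv, ← Real.rpow_neg hs0.le]
            have hq : qbar s ≤ qbar ε := hqmono hε (Set.mem_Ioi.2 hs0) (le_of_lt hεs)
            have : (0:ℝ) ≤ s ^ (-(1 + α)) := Real.rpow_nonneg hs0.le _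
            nlinarith
          · rw [Set.indicator_of_notMem hmem]
            exact zero_le
        calc (∫⁻ s in Set.Ioi (0:ℝ), Set.indicator ({x : (EuclideanSpace ℝ (Fin d)) | ε < ‖x‖} ∪ {0})
              (fun _ => ENNReal.ofReal (qbar s / s ^ (1 + α))) (s • θ))
            ≤ ∫⁻ s in Set.Ioi (0:ℝ), Set.indicator (Set.Ioi ε)
              (fun s => ENNReal.ofReal (qbar ε * s ^ (-(1 + α)))) s := by
              apply lintegral_mono_ae
              filter_upwards [ae_restrict_mem measurableSet_Ioi] with s hs
              exact step s hs
          _ = ∫⁻ s in Set.Ioi ε, ENNReal.ofReal (qbar ε * s ^ (-(1 + α)))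
                ∂((volume : Measure ℝ).restrict (Set.Ioi 0)) :=
              lintegral_indicator measurableSet_Ioi _
          _ = B := by
              have hss : Set.Ioi ε ∩ Set.Ioi (0:ℝ) = Set.Ioi ε :=
                Set.inter_eq_left.2 (fun x hx => lt_trans hε (Set.mem_Ioi.1 hx))
              rw [Measure.restrict_restrict measurableSet_Ioi, hss]
      calc ν ({x : (EuclideanSpace ℝ (Fin d)) | ε < ‖x‖} ∪ {0}) ≤ temperedDom d α qbar μ _ := hbound
        _ ≤ ∫⁻ _θ, B ∂μ := lintegral_mono_ae hinner
        _ = B * μ Set.univ := lintegral_const B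
        _ < ⊤ := ENNReal.mul_lt_top hBfin (measure_lt_top μ _)
    · -- spanning
      ext x
      simp only [Set.mem_iUnion, Set.mem_univ, iff_true]
      by_cases hx : x = 0
      · exact ⟨0, Or.inr (by simp [hx])⟩
      · have hxn : 0 < ‖x‖ := norm_pos_iff.2 hx
        obtain ⟨n, hn⟩ := exists_nat_gt ‖x‖⁻¹
        refine ⟨n, Or.inl ?_⟩
        simp only [Set.mem_setOf_eq]
        rw [inv_lt_comm₀ (by positivity) hxn]
        calc ‖x‖⁻¹ < n := hn
          _ ≤ (n : ℝ) + 1 := by linarith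
  -- the constant
  refine ⟨C_D ^ N, pow_pos hCD N, ?_⟩
  intro A hA
  -- inner integral as a function of direction, with the measurable modification qt
  set I : (EuclideanSpace ℝ (Fin d)) → ℝ≥0∞ := fun u => ∫⁻ r in Set.Ioi (0:ℝ),
    Set.indicator A (fun _ => ENNReal.ofReal (qt r / r ^ (1 + α))) (r • u) with hI_def
  have hIpt : ∀ u : (EuclideanSpace ℝ (Fin d)), (∫⁻ r in Set.Ioi (0:ℝ),
      Set.indicator A (fun _ => ENNReal.ofReal (qbar r / r ^ (1 + α))) (r • u)) = I u := by
    intro u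
    apply lintegral_congr_ae
    filter_upwards [heq] with r hr
    rw [hr]
  have hindmeas : ∀ u : (EuclideanSpace ℝ (Fin d)), Measurable (fun r : ℝ =>
      Set.indicator A (fun _ => ENNReal.ofReal (qt r / r ^ (1 + α))) (r • u)) := by
    intro u
    have : (fun r : ℝ => Set.indicator A
        (fun _ => ENNReal.ofReal (qt r / r ^ (1 + α))) (r • u))
        = Set.indicator ((fun r : ℝ => r • u) ⁻¹' A)
          (fun r => ENNReal.ofReal (qt r / r ^ (1 + α))) := by
      funext r
      by_cases h : r • u ∈ A <;> simp [Set.indicator_apply, h]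
    rw [this]
    exact Measurable.indicator
      (ENNReal.measurable_ofReal.comp (hqtm.div (measurable_id.pow_const _)))
      ((continuous_id.smul continuous_const).measurable hA)
  have hImeas : Measurable I := by
    apply Measurable.lintegral_prod_right (f := fun (u : (EuclideanSpace ℝ (Fin d))) (r : ℝ) =>
      Set.indicator A (fun _ => ENNReal.ofReal (qt r / r ^ (1 + α))) (r • u))
    have : (Function.uncurry fun (u : (EuclideanSpace ℝ (Fin d))) (r : ℝ) =>
        Set.indicator A (fun _ => ENNReal.ofReal (qt r / r ^ (1 + α))) (r • u))
        = Set.indicator ((fun p : (EuclideanSpace ℝ (Fin d)) × ℝ => p.2 • p.1) ⁻¹' A)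
          (fun p => ENNReal.ofReal (qt p.2 / p.2 ^ (1 + α))) := by
      funext p
      by_cases h : p.2 • p.1 ∈ A <;>
        simp [Function.uncurry, Set.indicator_apply, h]
    rw [this]
    exact Measurable.indicator
      (ENNReal.measurable_ofReal.comp ((hqtm.comp measurable_snd).div
        (measurable_snd.pow_const _)))
      ((continuous_snd.smul continuous_fst).measurable hA)
  -- the left-hand side
  have hLHS : nuS d σ ν A = ∫⁻ v in Set.Icc (0:ℝ) 1,
      ν ((fun ξ : (EuclideanSpace ℝ (Fin d)) => matVec (σ v) ξ) ⁻¹' A) ∂volume := by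
    rw [nuS, Measure.map_apply hf hA, Measure.prod_apply (hf hA)]
    rfl
  -- the key pointwise bound
  have key : ∀ v ∈ Set.Icc (0:ℝ) 1, ∀ θ : (EuclideanSpace ℝ (Fin d)), ‖θ‖ = 1 →
      (∫⁻ s in Set.Ioi (0:ℝ), Set.indicator ((fun ξ : (EuclideanSpace ℝ (Fin d)) => matVec (σ v) ξ) ⁻¹' A)
        (fun _ => ENNReal.ofReal (qbar s / s ^ (1 + α))) (s • θ))
      ≤ ENNReal.ofReal (C_D ^ N) * (ρ (v, θ) * I (g (v, θ))) := by
    intro v hv θ hθ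
    set u₀ : (EuclideanSpace ℝ (Fin d)) := matVec (σ v) θ with hu₀_def
    set c : ℝ := ‖u₀‖ with hc_def
    have hκ0 : 0 < κ := lt_of_lt_of_le one_pos hκ
    have hc : 0 < c := by
      have h1 := (hell v hv θ).1
      rw [hθ, mul_one] at h1
      exact lt_of_lt_of_le (inv_pos.2 hκ0) h1
    have hcκ : c ≤ κ := by
      have h2 := (hell v hv θ).2
      rwa [hθ, mul_one] at h2
    set u : (EuclideanSpace ℝ (Fin d)) := c⁻¹ • u₀ with hu_def
    have hgu : g (v, θ) = u := rfl
    have hρv : ρ (v, θ) = ENNReal.ofReal (c ^ α) := rfl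
    have hcu : ∀ s : ℝ, matVec (σ v) (s • θ) = (c * s) • u := by
      intro s
      rw [hu_def, smul_smul, matVec_smul]
      show s • u₀ = (c * s * c⁻¹) • u₀
      congr 1
      field_simp
    -- rewrite LHS indicator through the preimage
    have hLrw : (∫⁻ s in Set.Ioi (0:ℝ), Set.indicator ((fun ξ : (EuclideanSpace ℝ (Fin d)) => matVec (σ v) ξ) ⁻¹' A)
        (fun _ => ENNReal.ofReal (qbar s / s ^ (1 + α))) (s • θ))
        = ∫⁻ s in Set.Ioi (0:ℝ), Set.indicator A
          (fun _ => ENNReal.ofReal (qbar s / s ^ (1 + α))) ((c * s) • u) := by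
      apply lintegral_congr
      intro s
      rw [← hcu s]
      by_cases h : matVec (σ v) (s • θ) ∈ A <;>
        simp [Set.indicator_apply, h]
    -- scaling on the RHS inner integral
    have hscale : I u = ENNReal.ofReal c * ∫⁻ s in Set.Ioi (0:ℝ),
        Set.indicator A (fun _ => ENNReal.ofReal (qt (c * s) / (c * s) ^ (1 + α)))
          ((c * s) • u) :=
      scale_lintegral c hc _ (hindmeas u)
    -- replace qt by qbar inside the scaled integral
    have hqc : ∀ᵐ s ∂((volume : Measure ℝ).restrict (Set.Ioi 0)), qbar (c * s) = qt (c * s) := by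
      refine ae_of_ae_map (f := fun s : ℝ => c * s) (p := fun r => qbar r = qt r)
        ((measurable_const_mul c).aemeasurable) ?_
      rw [map_scale_restrict c hc]
      exact (Measure.ae_smul_measure heq _)
    have hqt_swap : (∫⁻ s in Set.Ioi (0:ℝ), Set.indicator A
        (fun _ => ENNReal.ofReal (qt (c * s) / (c * s) ^ (1 + α))) ((c * s) • u))
        = ∫⁻ s in Set.Ioi (0:ℝ), Set.indicator A
          (fun _ => ENNReal.ofReal (qbar (c * s) / (c * s) ^ (1 + α))) ((c * s) • u) := by
      apply lintegral_congr_ae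
      filter_upwards [hqc] with s hs
      rw [hs]
    rw [hLrw, hgu, hρv, hscale, hqt_swap]
    rw [← lintegral_const_mul' _ _ ENNReal.ofReal_ne_top,
      ← lintegral_const_mul' _ _ ENNReal.ofReal_ne_top,
      ← lintegral_const_mul' _ _ ENNReal.ofReal_ne_top]
    apply lintegral_mono_ae
    filter_upwards [ae_restrict_mem measurableSet_Ioi] with s hs
    have hs0 : (0 : ℝ) < s := hs
    by_cases hmem : ((c * s) • u) ∈ A
    · rw [Set.indicator_of_mem hmem, Set.indicator_of_mem hmem]
      rw [← ENNReal.ofReal_mul (by positivity), ← ENNReal.ofReal_mul (by positivity),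
        ← ENNReal.ofReal_mul (by positivity)]
      apply ENNReal.ofReal_le_ofReal
      have hkey : qbar s ≤ C_D ^ N * qbar (c * s) :=
        qbar_scale qbar C_D κ hCD hqmono hdoub N hN' c s hc hcκ hs0
      have hcs : (0:ℝ) < c * s := by positivity
      have hrw : (c * s) ^ (1 + α) = (c ^ (1 + α)) * s ^ (1 + α) :=
        Real.mul_rpow hc.le hs0.le
      have hca : c ^ (1 + α) = c * c ^ α := by
        rw [Real.rpow_add hc, Real.rpow_one]
      have hspow : (0:ℝ) < s ^ (1 + α) := Real.rpow_pos_of_pos hs0 _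
      have hcpow : (0:ℝ) < c ^ α := Real.rpow_pos_of_pos hc _
      have hqcs : (0:ℝ) ≤ qbar (c * s) := hqnonneg _ hcs
      rw [hrw, hca]
      rw [div_le_iff₀ hspow] at *
      have : C_D ^ N * (c ^ α * (c * (qbar (c * s) / (c * c ^ α * s ^ (1 + α)))))
          = C_D ^ N * qbar (c * s) / s ^ (1 + α) := by
        field_simp
      rw [this]
      rw [div_mul_cancel₀ _ hspow.ne']
      exact hkey
    · rw [Set.indicator_of_notMem hmem, Set.indicator_of_notMem hmem]
      simp
  -- bound nuS
  have hbound1 : nuS d σ ν A ≤ ENNReal.ofReal (C_D ^ N) *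
      ∫⁻ v in Set.Icc (0:ℝ) 1, ∫⁻ θ, ρ (v, θ) * I (g (v, θ)) ∂μ ∂volume := by
    rw [hLHS, ← lintegral_const_mul' _ _ ENNReal.ofReal_ne_top]
    apply lintegral_mono_ae
    filter_upwards [ae_restrict_mem measurableSet_Icc] with v hv
    have hpre : MeasurableSet ((fun ξ : (EuclideanSpace ℝ (Fin d)) => matVec (σ v) ξ) ⁻¹' A) := by
      have : Measurable (fun ξ : (EuclideanSpace ℝ (Fin d)) => matVec (σ v) ξ) := hf.comp measurable_prodMk_left
      exact this hA
    calc ν ((fun ξ : (EuclideanSpace ℝ (Fin d)) => matVec (σ v) ξ) ⁻¹' A)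
        ≤ temperedDom d α qbar μ ((fun ξ : (EuclideanSpace ℝ (Fin d)) => matVec (σ v) ξ) ⁻¹' A) := hdom _ hpre
      _ ≤ ∫⁻ θ, ENNReal.ofReal (C_D ^ N) * (ρ (v, θ) * I (g (v, θ))) ∂μ := by
          apply lintegral_mono_ae
          filter_upwards [hae_sph] with θ hθ
          exact key v hv θ hθ
      _ = ENNReal.ofReal (C_D ^ N) * ∫⁻ θ, ρ (v, θ) * I (g (v, θ)) ∂μ :=
          lintegral_const_mul' _ _ ENNReal.ofReal_ne_top
  -- rewrite the RHS temperedDom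
  have hRHS : temperedDom d α qbar (muS d α σ μ) A
      = ∫⁻ v in Set.Icc (0:ℝ) 1, ∫⁻ θ, ρ (v, θ) * I (g (v, θ)) ∂μ ∂volume := by
    have h1 : temperedDom d α qbar (muS d α σ μ) A = ∫⁻ u, I u ∂(muS d α σ μ) := by
      rw [temperedDom]
      exact lintegral_congr hIpt
    have hg_eq : (fun p : ℝ × EuclideanSpace ℝ (Fin d) =>
        ‖matVec (σ p.1) p.2‖⁻¹ • matVec (σ p.1) p.2) = g := rfl
    have hρ_eq : (fun p : ℝ × EuclideanSpace ℝ (Fin d) =>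
        ENNReal.ofReal (‖matVec (σ p.1) p.2‖ ^ α)) = ρ := rfl
    rw [h1, muS, hg_eq, hρ_eq]
    have hcomp : Measurable (fun p : ℝ × EuclideanSpace ℝ (Fin d) => I (g p)) :=
      hImeas.comp hg
    rw [lintegral_map hImeas hg]
    rw [lintegral_withDensity_eq_lintegral_mul _ hρ hcomp]
    simp only [Pi.mul_apply]
    rw [lintegral_prod (fun p => ρ p * I (g p)) ((hρ.mul hcomp).aemeasurable)]
  rw [hRHS]
  exact hbound1
end
end

section
/- There exists a constant c_α > 0 depending only on α such that the following holds. If ν₁ and ν₂ are Borel measures on ℝ^d with ν_i(A) ≤ T_{q̄,μ}(A) for i = 1,2 and |ν₁(A) − ν₂(A)| ≤ ε T_{q̄,μ}(A) for every Borel set A, for some ε ≥ 0, then for every ζ ∈ ℝ^d both integrals ∫_{ℝ^d} (1 − cos⟨ζ,ξ⟩) ν_i(dξ) are finite and | ∫_{ℝ^d} (1 − cos⟨ζ,ξ⟩) ν₁(dξ) − ∫_{ℝ^d} (1 − cos⟨ζ,ξ⟩) ν₂(dξ) | ≤ c_α · ε · M · μ(S^{d−1}) · |ζ|^α. -/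
open MeasureTheory
open scoped ENNReal InnerProductSpace

noncomputable section

namespace Stmt15Aux

lemma piece1 {α s₀ : ℝ} (hα2 : α < 2) (hs₀ : 0 < s₀) :
    ∫⁻ s in Set.Ioc 0 s₀, ENNReal.ofReal (s ^ (1 - α)) = ENNReal.ofReal (s₀ ^ (2 - α) / (2 - α)) := by
  have hr : (-1:ℝ) < 1 - α := by linarith
  have hint : IntegrableOn (fun s : ℝ => s ^ (1 - α)) (Set.Ioc 0 s₀) := by
    have := intervalIntegral.intervalIntegrable_rpow' (a := 0) (b := s₀) hr
    rwa [intervalIntegrable_iff_integrableOn_Ioc_of_le hs₀.le] at this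
  rw [← ofReal_integral_eq_lintegral_ofReal hint
      ((ae_restrict_iff' measurableSet_Ioc).2 (ae_of_all _ fun s hs => Real.rpow_nonneg hs.1.le _))]
  congr 1
  rw [← intervalIntegral.integral_of_le hs₀.le, integral_rpow (Or.inl hr)]
  have : (1:ℝ) - α + 1 = 2 - α := by ring
  rw [this, Real.zero_rpow (by linarith : (2:ℝ) - α ≠ 0), sub_zero]

lemma piece2 {α s₀ : ℝ} (hα0 : 0 < α) (hs₀ : 0 < s₀) :
    ∫⁻ s in Set.Ioi s₀, ENNReal.ofReal (s ^ (-(1 + α))) = ENNReal.ofReal (s₀ ^ (-α) / α) := by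
  have hr : -(1 + α) < (-1:ℝ) := by linarith
  rw [← ofReal_integral_eq_lintegral_ofReal (integrableOn_Ioi_rpow_of_lt hr hs₀)
      ((ae_restrict_iff' measurableSet_Ioi).2 (ae_of_all _ fun s hs =>
        Real.rpow_nonneg (hs₀.trans hs).le _))]
  congr 1
  rw [integral_Ioi_rpow_of_lt hr hs₀]
  have : -(1 + α) + 1 = -α := by ring
  rw [this]
  field_simp

lemma keyint {α b M : ℝ} (hα0 : 0 < α) (hα2 : α < 2) (hb : 0 ≤ b) (hM : 0 ≤ M) :
    ∫⁻ s in Set.Ioi (0:ℝ), ENNReal.ofReal (min 2 (s ^ 2 * b ^ 2 / 2) * (M / s ^ (1 + α)))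
      ≤ ENNReal.ofReal ((1 / (2 * (2 - α)) + 2 / α) * M * b ^ α) := by
  have h2α : (0:ℝ) < 2 - α := by linarith
  rcases eq_or_lt_of_le hb with hb0 | hb
  · simp only [← hb0]
    have : ∀ s : ℝ, min 2 (s ^ 2 * (0:ℝ) ^ 2 / 2) * (M / s ^ (1 + α)) = 0 := by
      intro s
      simp [min_eq_right (by positivity : (0:ℝ) ≤ 2)]
    simp only [this, ENNReal.ofReal_zero, lintegral_const, zero_mul, zero_le]
  set s₀ : ℝ := 1 / b with hs₀def
  have hs₀ : 0 < s₀ := by positivity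
  have hsplit : Set.Ioi (0:ℝ) = Set.Ioc 0 s₀ ∪ Set.Ioi s₀ := (Set.Ioc_union_Ioi_eq_Ioi hs₀.le).symm
  rw [hsplit, lintegral_union measurableSet_Ioi Set.Ioc_disjoint_Ioi_same]
  have hbM : (0:ℝ) ≤ b ^ 2 * M / 2 := by positivity
  have h2M : (0:ℝ) ≤ 2 * M := by linarith
  have hA : ∫⁻ s in Set.Ioc 0 s₀, ENNReal.ofReal (min 2 (s ^ 2 * b ^ 2 / 2) * (M / s ^ (1 + α)))
      ≤ ENNReal.ofReal (b ^ 2 * M / 2) * ENNReal.ofReal (s₀ ^ (2 - α) / (2 - α)) := by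
    have hle : ∀ s ∈ Set.Ioc (0:ℝ) s₀,
        ENNReal.ofReal (min 2 (s ^ 2 * b ^ 2 / 2) * (M / s ^ (1 + α)))
          ≤ ENNReal.ofReal (b ^ 2 * M / 2) * ENNReal.ofReal (s ^ (1 - α)) := by
      intro s hs
      have hsp : (0:ℝ) < s := hs.1
      rw [← ENNReal.ofReal_mul hbM]
      apply ENNReal.ofReal_le_ofReal
      have h1 : min 2 (s ^ 2 * b ^ 2 / 2) * (M / s ^ (1 + α))
          ≤ (s ^ 2 * b ^ 2 / 2) * (M / s ^ (1 + α)) :=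
        mul_le_mul_of_nonneg_right (min_le_right _ _) (by positivity)
      refine h1.trans (le_of_eq ?_)
      have h2 : s ^ (2:ℕ) = s ^ ((2:ℕ):ℝ) := (Real.rpow_natCast s 2).symm
      have h3 : s ^ ((2:ℕ):ℝ) / s ^ (1 + α) = s ^ (1 - α) := by
        rw [← Real.rpow_sub hsp]; congr 1; push_cast; ring
      rw [h2, ← h3]; ring
    calc _ ≤ ∫⁻ s in Set.Ioc 0 s₀, ENNReal.ofReal (b ^ 2 * M / 2) * ENNReal.ofReal (s ^ (1 - α)) :=
          setLIntegral_mono' measurableSet_Ioc hle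
      _ = ENNReal.ofReal (b ^ 2 * M / 2) * ∫⁻ s in Set.Ioc 0 s₀, ENNReal.ofReal (s ^ (1 - α)) :=
          lintegral_const_mul' _ _ ENNReal.ofReal_ne_top
      _ = _ := by rw [piece1 hα2 hs₀]
  have hB : ∫⁻ s in Set.Ioi s₀, ENNReal.ofReal (min 2 (s ^ 2 * b ^ 2 / 2) * (M / s ^ (1 + α)))
      ≤ ENNReal.ofReal (2 * M) * ENNReal.ofReal (s₀ ^ (-α) / α) := by
    have hle : ∀ s ∈ Set.Ioi s₀,
        ENNReal.ofReal (min 2 (s ^ 2 * b ^ 2 / 2) * (M / s ^ (1 + α)))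
          ≤ ENNReal.ofReal (2 * M) * ENNReal.ofReal (s ^ (-(1 + α))) := by
      intro s hs
      have hsp : (0:ℝ) < s := hs₀.trans hs
      rw [← ENNReal.ofReal_mul h2M]
      apply ENNReal.ofReal_le_ofReal
      have h1 : min 2 (s ^ 2 * b ^ 2 / 2) * (M / s ^ (1 + α))
          ≤ 2 * (M / s ^ (1 + α)) :=
        mul_le_mul_of_nonneg_right (min_le_left _ _) (by positivity)
      refine h1.trans (le_of_eq ?_)
      rw [Real.rpow_neg hsp.le]
      field_simp
    calc _ ≤ ∫⁻ s in Set.Ioi s₀, ENNReal.ofReal (2 * M) * ENNReal.ofReal (s ^ (-(1 + α))) :=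
          setLIntegral_mono' measurableSet_Ioi hle
      _ = ENNReal.ofReal (2 * M) * ∫⁻ s in Set.Ioi s₀, ENNReal.ofReal (s ^ (-(1 + α))) :=
          lintegral_const_mul' _ _ ENNReal.ofReal_ne_top
      _ = _ := by rw [piece2 hα0 hs₀]
  refine (add_le_add hA hB).trans (le_of_eq ?_)
  have hy : (0:ℝ) ≤ s₀ ^ (2 - α) / (2 - α) := by positivity
  have hv : (0:ℝ) ≤ s₀ ^ (-α) / α := by positivity
  rw [← ENNReal.ofReal_mul hbM, ← ENNReal.ofReal_mul h2M,
    ← ENNReal.ofReal_add (by nlinarith) (by nlinarith)]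
  congr 1
  have e0 : s₀ = b ^ (-1:ℝ) := by rw [hs₀def, Real.rpow_neg_one, one_div]
  have e1 : s₀ ^ (2 - α) = b ^ α / b ^ 2 := by
    rw [e0, ← Real.rpow_mul hb.le]
    have : (-1:ℝ) * (2 - α) = α - 2 := by ring
    rw [this, Real.rpow_sub hb, Real.rpow_two]
  have e2 : s₀ ^ (-α) = b ^ α := by
    rw [e0, ← Real.rpow_mul hb.le, neg_one_mul, neg_neg]
  rw [e1, e2]
  have hb2 : (b:ℝ) ^ 2 ≠ 0 := by positivity
  field_simp

/-- the dominating set function agrees with an honest measure on measurable sets. -/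
lemma temperedDom_eq {d : ℕ} {α : ℝ} (qbar : ℝ → ℝ) (μ : Measure (EuclideanSpace ℝ (Fin d)))
    (w : ℝ → ℝ≥0∞)
    (hw : ∀ s : ℝ, 0 < s → w s = ENNReal.ofReal (qbar s / s ^ (1 + α)))
    (A : Set (EuclideanSpace ℝ (Fin d))) (hA : MeasurableSet A) :
    temperedDom d α qbar μ A =
      Measure.map (fun p : EuclideanSpace ℝ (Fin d) × ℝ => p.2 • p.1)
        (μ.prod ((volume.restrict (Set.Ioi (0:ℝ))).withDensity w)) A := by
  have hf : Measurable fun p : EuclideanSpace ℝ (Fin d) × ℝ => p.2 • p.1 :=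
    (continuous_snd.smul continuous_fst).measurable
  rw [Measure.map_apply hf hA, Measure.prod_apply (hf hA)]
  unfold temperedDom
  refine lintegral_congr fun θ => ?_
  have hSm : MeasurableSet {s : ℝ | s • θ ∈ A} := (measurable_id.smul_const θ) hA
  have : (Prod.mk θ ⁻¹' ((fun p : EuclideanSpace ℝ (Fin d) × ℝ => p.2 • p.1) ⁻¹' A))
      = {s : ℝ | s • θ ∈ A} := rfl
  rw [this, withDensity_apply _ hSm, Measure.restrict_restrict hSm]
  rw [← lintegral_indicator (hSm.inter measurableSet_Ioi) _]
  rw [← lintegral_indicator measurableSet_Ioi _]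
  refine lintegral_congr fun s => ?_
  by_cases hs : s ∈ Set.Ioi (0:ℝ)
  · by_cases hmem : s • θ ∈ A
    · simp [Set.indicator_apply, hs, hmem, hw s hs]
    · simp [Set.indicator_apply, hs, hmem]
  · simp [Set.indicator_apply, hs]

/-- bound for the Lévy-type lintegral against the dominating measure. -/
lemma nuT_bound {d : ℕ} {α : ℝ} (hα0 : 0 < α) (hα2 : α < 2) {M : ℝ} (hM : 0 ≤ M)
    (μ : Measure (EuclideanSpace ℝ (Fin d))) [IsFiniteMeasure μ]
    (hμ1 : μ {θv : EuclideanSpace ℝ (Fin d) | ‖θv‖ ≠ 1} = 0)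
    (w : ℝ → ℝ≥0∞) (hwm : Measurable w)
    (hwle : ∀ s : ℝ, 0 < s → w s ≤ ENNReal.ofReal (M / s ^ (1 + α)))
    (ζ : EuclideanSpace ℝ (Fin d)) :
    ∫⁻ ξ, ENNReal.ofReal (1 - Real.cos ⟪ζ, ξ⟫_ℝ)
        ∂(Measure.map (fun p : EuclideanSpace ℝ (Fin d) × ℝ => p.2 • p.1)
          (μ.prod ((volume.restrict (Set.Ioi (0:ℝ))).withDensity w)))
      ≤ ENNReal.ofReal ((1 / (2 * (2 - α)) + 2 / α) * M * ‖ζ‖ ^ α) * μ Set.univ := by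
  have hf : Measurable fun p : EuclideanSpace ℝ (Fin d) × ℝ => p.2 • p.1 :=
    (continuous_snd.smul continuous_fst).measurable
  have hGc : Continuous fun ξ : EuclideanSpace ℝ (Fin d) => 1 - Real.cos ⟪ζ, ξ⟫_ℝ :=
    continuous_const.sub (Real.continuous_cos.comp (continuous_const.inner continuous_id))
  have hGm : Measurable fun ξ : EuclideanSpace ℝ (Fin d) =>
      ENNReal.ofReal (1 - Real.cos ⟪ζ, ξ⟫_ℝ) := hGc.measurable.ennreal_ofReal
  rw [lintegral_map hGm hf,
    lintegral_prod (fun p : EuclideanSpace ℝ (Fin d) × ℝ =>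
      ENNReal.ofReal (1 - Real.cos ⟪ζ, p.2 • p.1⟫_ℝ)) ((hGm.comp hf).aemeasurable)]
  have hae : ∀ᵐ θ ∂μ, ‖θ‖ = 1 := by rw [ae_iff]; exact hμ1
  calc _ ≤ ∫⁻ _θ, ENNReal.ofReal ((1 / (2 * (2 - α)) + 2 / α) * M * ‖ζ‖ ^ α) ∂μ := by
        refine lintegral_mono_ae (hae.mono fun θ hθ => ?_)
        have hcomp : Measurable fun s : ℝ => ENNReal.ofReal (1 - Real.cos ⟪ζ, s • θ⟫_ℝ) :=
          hGm.comp (measurable_id.smul_const θ)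
        rw [lintegral_withDensity_eq_lintegral_mul _ hwm hcomp]
        refine le_trans (setLIntegral_mono' measurableSet_Ioi fun s hs => ?_)
          (keyint hα0 hα2 (norm_nonneg ζ) hM)
        have hsp : (0:ℝ) < s := hs
        have hd0 : (0:ℝ) ≤ M / s ^ (1 + α) :=
          div_nonneg hM (Real.rpow_pos_of_pos hsp _).le
        have hcos2 : 1 - Real.cos ⟪ζ, s • θ⟫_ℝ ≤ min 2 (s ^ 2 * ‖ζ‖ ^ 2 / 2) := by
          apply le_min
          · nlinarith [Real.neg_one_le_cos ⟪ζ, s • θ⟫_ℝ]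
          · have h1 : 1 - Real.cos ⟪ζ, s • θ⟫_ℝ ≤ ⟪ζ, s • θ⟫_ℝ ^ 2 / 2 := by
              nlinarith [Real.one_sub_sq_div_two_le_cos (x := ⟪ζ, s • θ⟫_ℝ)]
            refine h1.trans ?_
            rw [real_inner_smul_right, mul_pow]
            have habs := abs_real_inner_le_norm ζ θ
            rw [hθ, mul_one] at habs
            have h2 : ⟪ζ, θ⟫_ℝ ^ 2 ≤ ‖ζ‖ ^ 2 := by
              nlinarith [sq_abs ⟪ζ, θ⟫_ℝ, abs_nonneg ⟪ζ, θ⟫_ℝ]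
            nlinarith [sq_nonneg s]
        calc (w * fun s : ℝ => ENNReal.ofReal (1 - Real.cos ⟪ζ, s • θ⟫_ℝ)) s
            ≤ ENNReal.ofReal (M / s ^ (1 + α)) * ENNReal.ofReal (min 2 (s ^ 2 * ‖ζ‖ ^ 2 / 2)) :=
              mul_le_mul' (hwle s hsp) (ENNReal.ofReal_le_ofReal hcos2)
          _ = ENNReal.ofReal (min 2 (s ^ 2 * ‖ζ‖ ^ 2 / 2) * (M / s ^ (1 + α))) := by
              rw [← ENNReal.ofReal_mul hd0, mul_comm]
    _ = _ := lintegral_const _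

end Stmt15Aux

/-- there is `c_α > 0` depending only on `α` (and the dimension) such that if
`ν₁, ν₂ ≤ T_{q̄,μ}` and `|ν₁ − ν₂| ≤ ε T_{q̄,μ}`, then the Lévy-symbol-type integrals
`∫ (1 − cos⟨ζ,ξ⟩) νᵢ(dξ)` are finite and differ by at most `c_α ε M μ(S^{d−1}) |ζ|^α`. -/
theorem stmt15 (d : ℕ) (hd : 1 ≤ d) (α : ℝ) (hα0 : 0 < α) (hα2 : α < 2) :
    ∃ c_α > 0,
      ∀ (qbar : ℝ → ℝ) (M : ℝ), 0 < M →
        AntitoneOn qbar (Set.Ioi 0) → (∀ s : ℝ, 0 < s → 0 ≤ qbar s ∧ qbar s ≤ M) →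
        ∀ μ : Measure (EuclideanSpace ℝ (Fin d)), IsFiniteMeasure μ →
          μ {θv : EuclideanSpace ℝ (Fin d) | ‖θv‖ ≠ 1} = 0 →
        ∀ ν₁ ν₂ : Measure (EuclideanSpace ℝ (Fin d)), ∀ ε : ℝ, 0 ≤ ε →
          (∀ A : Set (EuclideanSpace ℝ (Fin d)), MeasurableSet A →
            ν₁ A ≤ temperedDom d α qbar μ A) →
          (∀ A : Set (EuclideanSpace ℝ (Fin d)), MeasurableSet A →
            ν₂ A ≤ temperedDom d α qbar μ A) →
          (∀ A : Set (EuclideanSpace ℝ (Fin d)), MeasurableSet A →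
            ν₁ A ≤ ν₂ A + ENNReal.ofReal ε * temperedDom d α qbar μ A ∧
            ν₂ A ≤ ν₁ A + ENNReal.ofReal ε * temperedDom d α qbar μ A) →
          ∀ ζ : EuclideanSpace ℝ (Fin d),
            Integrable (fun ξ => 1 - Real.cos ⟪ζ, ξ⟫_ℝ) ν₁ ∧
            Integrable (fun ξ => 1 - Real.cos ⟪ζ, ξ⟫_ℝ) ν₂ ∧
            |(∫ ξ, (1 - Real.cos ⟪ζ, ξ⟫_ℝ) ∂ν₁) - ∫ ξ, (1 - Real.cos ⟪ζ, ξ⟫_ℝ) ∂ν₂| ≤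
              c_α * ε * M * (μ Set.univ).toReal * ‖ζ‖ ^ α := by
  classical
  have h2α : (0:ℝ) < 2 - α := by linarith
  set c₀ : ℝ := 1 / (2 * (2 - α)) + 2 / α with hc₀
  have hc₀pos : 0 < c₀ := by positivity
  refine ⟨c₀, hc₀pos, ?_⟩
  intro qbar M hM hqa hqb μ hμfin hμ1 ν₁ ν₂ ε hε hν₁ hν₂ hdiff ζ
  -- the extended density
  set qt : ℝ → ℝ := fun s => if s ≤ 0 then M else qbar s with hqt
  have hqt_anti : Antitone qt := by
    intro a b hab
    by_cases ha : a ≤ 0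
    · by_cases hb : b ≤ 0
      · simp [hqt, ha, hb]
      · simp only [hqt, ha, if_pos, hb, if_neg]
        exact (hqb b (not_le.1 hb)).2
    · have hb : ¬ b ≤ 0 := fun h => ha (hab.trans h)
      simp only [hqt, ha, hb, if_neg]
      exact hqa (Set.mem_Ioi.2 (not_le.1 ha)) (Set.mem_Ioi.2 (not_le.1 hb)) hab
  have hqtm : Measurable qt := hqt_anti.measurable
  set w : ℝ → ℝ≥0∞ := fun s => ENNReal.ofReal (qt s / s ^ (1 + α)) with hwdef
  have hwm : Measurable w := (hqtm.div (measurable_id.pow_const _)).ennreal_ofReal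
  have hw : ∀ s : ℝ, 0 < s → w s = ENNReal.ofReal (qbar s / s ^ (1 + α)) := by
    intro s hs
    simp [hwdef, hqt, not_le.2 hs]
  have hwle : ∀ s : ℝ, 0 < s → w s ≤ ENNReal.ofReal (M / s ^ (1 + α)) := by
    intro s hs
    rw [hw s hs]
    apply ENNReal.ofReal_le_ofReal
    have hpow := Real.rpow_pos_of_pos hs (1 + α)
    gcongr
    exact (hqb s hs).2
  set νT : Measure (EuclideanSpace ℝ (Fin d)) :=
    Measure.map (fun p : EuclideanSpace ℝ (Fin d) × ℝ => p.2 • p.1)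
      (μ.prod ((volume.restrict (Set.Ioi (0:ℝ))).withDensity w)) with hνT
  have hTeq : ∀ A : Set (EuclideanSpace ℝ (Fin d)), MeasurableSet A →
      temperedDom d α qbar μ A = νT A := fun A hA =>
    Stmt15Aux.temperedDom_eq qbar μ w hw A hA
  -- the integrand
  set g : EuclideanSpace ℝ (Fin d) → ℝ := fun ξ => 1 - Real.cos ⟪ζ, ξ⟫_ℝ with hg
  have hgc : Continuous g :=
    continuous_const.sub (Real.continuous_cos.comp (continuous_const.inner continuous_id))
  have hg0 : ∀ ξ, 0 ≤ g ξ := fun ξ => by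
    simp only [hg, sub_nonneg]; exact Real.cos_le_one _
  set G : EuclideanSpace ℝ (Fin d) → ℝ≥0∞ := fun ξ => ENNReal.ofReal (g ξ) with hG
  have hGm : Measurable G := hgc.measurable.ennreal_ofReal
  -- the key bound
  have hTbound : ∫⁻ ξ, G ξ ∂νT ≤ ENNReal.ofReal (c₀ * M * ‖ζ‖ ^ α) * μ Set.univ :=
    Stmt15Aux.nuT_bound hα0 hα2 hM.le μ hμ1 w hwm hwle ζ
  have hRfin : ENNReal.ofReal (c₀ * M * ‖ζ‖ ^ α) * μ Set.univ ≠ ⊤ :=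
    ENNReal.mul_ne_top ENNReal.ofReal_ne_top (measure_ne_top μ _)
  have hTfin : ∫⁻ ξ, G ξ ∂νT ≠ ⊤ := (hTbound.trans_lt hRfin.lt_top).ne
  -- domination of ν₁, ν₂ by νT
  have hle₁ : ν₁ ≤ νT := Measure.le_iff.2 fun A hA => (hν₁ A hA).trans_eq (hTeq A hA)
  have hle₂ : ν₂ ≤ νT := Measure.le_iff.2 fun A hA => (hν₂ A hA).trans_eq (hTeq A hA)
  have h₁T : ∫⁻ ξ, G ξ ∂ν₁ ≤ ∫⁻ ξ, G ξ ∂νT := lintegral_mono' hle₁ le_rfl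
  have h₂T : ∫⁻ ξ, G ξ ∂ν₂ ≤ ∫⁻ ξ, G ξ ∂νT := lintegral_mono' hle₂ le_rfl
  have h₁fin : ∫⁻ ξ, G ξ ∂ν₁ ≠ ⊤ := (h₁T.trans_lt hTfin.lt_top).ne
  have h₂fin : ∫⁻ ξ, G ξ ∂ν₂ ≠ ⊤ := (h₂T.trans_lt hTfin.lt_top).ne
  -- integrability
  have hint : ∀ (ν : Measure (EuclideanSpace ℝ (Fin d))), (∫⁻ ξ, G ξ ∂ν) ≠ ⊤ →
      Integrable g ν := by
    intro ν hν
    refine ⟨hgc.aestronglyMeasurable, ?_⟩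
    rw [hasFiniteIntegral_iff_ofReal (ae_of_all _ hg0)]
    exact hν.lt_top
  have hI₁ : Integrable g ν₁ := hint ν₁ h₁fin
  have hI₂ : Integrable g ν₂ := hint ν₂ h₂fin
  refine ⟨hI₁, hI₂, ?_⟩
  -- the closeness bound on lintegrals
  have hεT : (ENNReal.ofReal ε * ∫⁻ ξ, G ξ ∂νT) ≠ ⊤ :=
    ENNReal.mul_ne_top ENNReal.ofReal_ne_top hTfin
  have hclose : ∀ (νa νb : Measure (EuclideanSpace ℝ (Fin d))),
      (∀ A : Set (EuclideanSpace ℝ (Fin d)), MeasurableSet A →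
        νa A ≤ νb A + ENNReal.ofReal ε * temperedDom d α qbar μ A) →
      ∫⁻ ξ, G ξ ∂νa ≤ ∫⁻ ξ, G ξ ∂νb + ENNReal.ofReal ε * ∫⁻ ξ, G ξ ∂νT := by
    intro νa νb hab
    have hle : νa ≤ νb + (ENNReal.ofReal ε) • νT := by
      refine Measure.le_iff.2 fun A hA => ?_
      have := hab A hA
      rw [hTeq A hA] at this
      simpa [Measure.add_apply, Measure.smul_apply, smul_eq_mul] using this
    calc ∫⁻ ξ, G ξ ∂νa ≤ ∫⁻ ξ, G ξ ∂(νb + (ENNReal.ofReal ε) • νT) := lintegral_mono' hle le_rfl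
      _ = ∫⁻ ξ, G ξ ∂νb + ENNReal.ofReal ε * ∫⁻ ξ, G ξ ∂νT := by
          rw [lintegral_add_measure, lintegral_smul_measure, smul_eq_mul]
  have hc₁ := hclose ν₁ ν₂ fun A hA => (hdiff A hA).1
  have hc₂ := hclose ν₂ ν₁ fun A hA => (hdiff A hA).2
  -- pass to real integrals
  have hI₁eq : ∫ ξ, g ξ ∂ν₁ = (∫⁻ ξ, G ξ ∂ν₁).toReal :=
    integral_eq_lintegral_of_nonneg_ae (ae_of_all _ hg0) hgc.aestronglyMeasurable
  have hI₂eq : ∫ ξ, g ξ ∂ν₂ = (∫⁻ ξ, G ξ ∂ν₂).toReal :=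
    integral_eq_lintegral_of_nonneg_ae (ae_of_all _ hg0) hgc.aestronglyMeasurable
  have habs : |(∫ ξ, g ξ ∂ν₁) - ∫ ξ, g ξ ∂ν₂| ≤ (ENNReal.ofReal ε * ∫⁻ ξ, G ξ ∂νT).toReal := by
    rw [hI₁eq, hI₂eq, abs_sub_le_iff]
    constructor
    · have h := ENNReal.toReal_mono (by exact ENNReal.add_ne_top.2 ⟨h₂fin, hεT⟩) hc₁
      rw [ENNReal.toReal_add h₂fin hεT] at h
      linarith
    · have h := ENNReal.toReal_mono (by exact ENNReal.add_ne_top.2 ⟨h₁fin, hεT⟩) hc₂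
      rw [ENNReal.toReal_add h₁fin hεT] at h
      linarith
  refine habs.trans ?_
  have hc0nn : (0:ℝ) ≤ c₀ * M * ‖ζ‖ ^ α := by positivity
  have hstep : (ENNReal.ofReal ε * ∫⁻ ξ, G ξ ∂νT).toReal
      ≤ ε * (c₀ * M * ‖ζ‖ ^ α * (μ Set.univ).toReal) := by
    rw [ENNReal.toReal_mul, ENNReal.toReal_ofReal hε]
    apply mul_le_mul_of_nonneg_left _ hε
    calc (∫⁻ ξ, G ξ ∂νT).toReal
        ≤ (ENNReal.ofReal (c₀ * M * ‖ζ‖ ^ α) * μ Set.univ).toReal :=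
          ENNReal.toReal_mono hRfin hTbound
      _ = c₀ * M * ‖ζ‖ ^ α * (μ Set.univ).toReal := by
          rw [ENNReal.toReal_mul, ENNReal.toReal_ofReal hc0nn]
  refine hstep.trans (le_of_eq ?_)
  ring
end
end
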